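/- arXiv:2110.01753 — 8 statements merged into one kernel-verified Lean document; each statement's English description precedes it below -/
import Mathlib

section
/- Let a ∈ k be nonzero and let δ be the k-derivation x(x+a)·∂/∂x + ay·∂/∂y of k[x,y]. Then the kernel of δ equals the k-subalgebra of k[x,y] generated by x², y² and x²y + axy. -/
open MvPolynomial

set_option linter.unusedSectionVars false
set_option maxHeartbeats 1000000

section Stmt2Aux

variable {k : Type*} [Field k] [CharP k 2]

lemma aux_coeff_pderiv (i : Fin 2) (m : Fin 2 →₀ ℕ) (f : MvPolynomial (Fin 2) k) :
    coeff m (pderiv i f) = ((m i + 1 : ℕ) : k) * coeff (m + Finsupp.single i 1) f := by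
  induction f using MvPolynomial.induction_on' with
  | add p q hp hq => simp [map_add, hp, hq, mul_add]
  | monomial u c =>
    rw [pderiv_monomial, coeff_monomial, coeff_monomial]
    by_cases h : u = m + Finsupp.single i 1
    · subst h
      have h1 : (m + Finsupp.single i 1) - Finsupp.single i 1 = m := by simp
      have h2 : ((m + Finsupp.single i 1 : Fin 2 →₀ ℕ)) i = m i + 1 := by simp
      rw [if_pos h1, if_pos rfl, h2]
      push_cast; ring
    · rw [if_neg h, mul_zero]
      by_cases h' : u - Finsupp.single i 1 = m
      · rw [if_pos h']
        by_cases hu : u i = 0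
        · simp [hu]
        · exfalso
          apply h
          rw [← h']
          rw [tsub_add_cancel_of_le]
          rwa [Finsupp.single_le_iff, Nat.one_le_iff_ne_zero]
      · rw [if_neg h']


lemma aux_H1 (i : Fin 2) (n : Fin 2 →₀ ℕ) (f : MvPolynomial (Fin 2) k) :
    coeff n (X i * pderiv i f) = ((n i : ℕ) : k) * coeff n f := by
  rw [coeff_X_mul']
  by_cases h : i ∈ n.support
  · rw [if_pos h, aux_coeff_pderiv]
    have hni : n i ≠ 0 := Finsupp.mem_support_iff.1 h
    have h1 : ((n - Finsupp.single i 1 : Fin 2 →₀ ℕ)) i = n i - 1 := by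
      simp [Finsupp.tsub_apply]
    have h2 : (n - Finsupp.single i 1) + Finsupp.single i 1 = n := by
      rw [tsub_add_cancel_of_le]
      rwa [Finsupp.single_le_iff, Nat.one_le_iff_ne_zero]
    rw [h1, h2, Nat.sub_add_cancel (Nat.one_le_iff_ne_zero.2 hni)]
  · rw [if_neg h]
    have : n i = 0 := by simpa using (Finsupp.notMem_support_iff.1 h)
    rw [this]
    simp

lemma aux_happ (a : k) (δ : Derivation k (MvPolynomial (Fin 2) k) (MvPolynomial (Fin 2) k))
    (hδ : δ = mkDerivation k ![(X 0 : MvPolynomial (Fin 2) k) * (X 0 + C a), C a * X 1])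
    (f : MvPolynomial (Fin 2) k) :
    δ f = X 0 * (X 0 * pderiv 0 f) + C a * (X 0 * pderiv 0 f) + C a * (X 1 * pderiv 1 f) := by
  have : δ = ((X 0 * X 0 + C a * X 0 : MvPolynomial (Fin 2) k)) • (pderiv (0 : Fin 2)) + ((C a * X 1 : MvPolynomial (Fin 2) k)) • (pderiv (1 : Fin 2)) := by
    rw [hδ]
    apply MvPolynomial.derivation_ext
    intro i
    fin_cases i <;>
      simp [mkDerivation_X, Derivation.coe_smul, pderiv_X, Pi.single_apply] <;> ring
  rw [this]
  simp only [Derivation.add_apply, Derivation.smul_apply, smul_eq_mul]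
  ring


lemma aux_cast_even {n : ℕ} (h : Even n) : ((n : ℕ) : k) = 0 := by
  obtain ⟨r, rfl⟩ := h
  push_cast
  rw [← two_mul, CharTwo.two_eq_zero, zero_mul]

lemma aux_cast_odd {n : ℕ} (h : Odd n) : ((n : ℕ) : k) = 1 := by
  obtain ⟨r, rfl⟩ := h
  push_cast
  rw [CharTwo.two_eq_zero, zero_mul, zero_add]


-- master relation, assuming the happ form and δ f = 0
lemma aux_master (a : k) (f : MvPolynomial (Fin 2) k)
    (h : X 0 * (X 0 * pderiv 0 f) + C a * (X 0 * pderiv 0 f) + C a * (X 1 * pderiv 1 f) = 0)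
    (n : Fin 2 →₀ ℕ) :
    ((n 0 : ℕ) : k) * coeff n f
      + a * (((n 0 + 1 : ℕ) : k) + ((n 1 : ℕ) : k)) * coeff (n + Finsupp.single 0 1) f = 0 := by
  have := congrArg (coeff (n + Finsupp.single 0 1)) h
  rw [coeff_add, coeff_add, coeff_zero, coeff_C_mul, coeff_C_mul, aux_H1, aux_H1] at this
  rw [show (n + Finsupp.single 0 1) = (Finsupp.single (0 : Fin 2) 1 + n) from add_comm _ _,
    coeff_X_mul, aux_H1] at this
  have e0 : ((Finsupp.single (0 : Fin 2) 1 + n : Fin 2 →₀ ℕ)) 0 = n 0 + 1 := by simp [add_comm]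
  have e1 : ((Finsupp.single (0 : Fin 2) 1 + n : Fin 2 →₀ ℕ)) 1 = n 1 := by simp [Finsupp.single_apply]
  rw [e0, e1] at this
  rw [show (n + Finsupp.single 0 1) = (Finsupp.single (0 : Fin 2) 1 + n) from add_comm _ _]
  rw [← this]
  push_cast
  ring

lemma aux_zero (a : k) (f : MvPolynomial (Fin 2) k)
    (h : X 0 * (X 0 * pderiv 0 f) + C a * (X 0 * pderiv 0 f) + C a * (X 1 * pderiv 1 f) = 0)
    (m : Fin 2 →₀ ℕ) (hm : m 0 = 0) :
    a * ((m 1 : ℕ) : k) * coeff m f = 0 := by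
  have := congrArg (coeff m) h
  rw [coeff_add, coeff_add, coeff_zero, coeff_C_mul, coeff_C_mul, aux_H1, aux_H1] at this
  rw [coeff_X_mul'] at this
  have h0 : (0 : Fin 2) ∉ m.support := by simp [Finsupp.mem_support_iff, hm]
  rw [if_neg h0, hm] at this
  rw [← this]; ring


lemma aux_mono_eq (m : Fin 2 →₀ ℕ) (c : k) :
    (monomial m c : MvPolynomial (Fin 2) k) = C c * X 0 ^ (m 0) * X 1 ^ (m 1) := by
  have hm : m = Finsupp.single 0 (m 0) + Finsupp.single 1 (m 1) := by
    ext x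
    fin_cases x <;> simp [Finsupp.single_apply]
  rw [hm, X_pow_eq_monomial, X_pow_eq_monomial, mul_assoc, monomial_mul, C_mul_monomial]
  simp

lemma aux_mono_mem (a : k) (m : Fin 2 →₀ ℕ) (c : k) (h0 : Even (m 0)) (h1 : Even (m 1)) :
    (monomial m c : MvPolynomial (Fin 2) k) ∈
      Algebra.adjoin k ({X 0 ^ 2, X 1 ^ 2, X 0 ^ 2 * X 1 + C a * (X 0 * X 1)} :
        Set (MvPolynomial (Fin 2) k)) := by
  obtain ⟨i, hi⟩ := h0
  obtain ⟨j, hj⟩ := h1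
  rw [aux_mono_eq, hi, hj, ← two_mul, ← two_mul, pow_mul, pow_mul]
  have m1 : (X 0 ^ 2 : MvPolynomial (Fin 2) k) ∈
      Algebra.adjoin k ({X 0 ^ 2, X 1 ^ 2, X 0 ^ 2 * X 1 + C a * (X 0 * X 1)} :
        Set (MvPolynomial (Fin 2) k)) :=
    Algebra.subset_adjoin (Set.mem_insert _ _)
  have m2 : (X 1 ^ 2 : MvPolynomial (Fin 2) k) ∈
      Algebra.adjoin k ({X 0 ^ 2, X 1 ^ 2, X 0 ^ 2 * X 1 + C a * (X 0 * X 1)} :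
        Set (MvPolynomial (Fin 2) k)) :=
    Algebra.subset_adjoin (Set.mem_insert_of_mem _ (Set.mem_insert _ _))
  exact mul_mem (mul_mem (Subalgebra.algebraMap_mem _ c)
    (Subalgebra.pow_mem _ m1 i)) (Subalgebra.pow_mem _ m2 j)

lemma aux_w_expand (a : k) (m : Fin 2 →₀ ℕ) (c : k) (h0 : m 0 ≠ 0) (h1 : m 1 ≠ 0) :
    (monomial (m - Finsupp.single 0 1 - Finsupp.single 1 1) c : MvPolynomial (Fin 2) k)
        * (X 0 ^ 2 * X 1 + C a * (X 0 * X 1))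
      = monomial (m + Finsupp.single 0 1) c + monomial m (a * c) := by
  have e1 : (X 0 ^ 2 * X 1 : MvPolynomial (Fin 2) k)
      = monomial (Finsupp.single 0 2 + Finsupp.single 1 1) 1 := by
    rw [X_pow_eq_monomial, show (X 1 : MvPolynomial (Fin 2) k) = X 1 ^ 1 from (pow_one _).symm,
      X_pow_eq_monomial, monomial_mul, one_mul]
  have e2 : (C a * (X 0 * X 1) : MvPolynomial (Fin 2) k)
      = monomial (Finsupp.single 0 1 + Finsupp.single 1 1) a := by
    rw [show (X 0 : MvPolynomial (Fin 2) k) = X 0 ^ 1 from (pow_one _).symm,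
      show (X 1 : MvPolynomial (Fin 2) k) = X 1 ^ 1 from (pow_one _).symm,
      X_pow_eq_monomial, X_pow_eq_monomial, monomial_mul, one_mul, C_mul_monomial, mul_one]
  have i1 : m - Finsupp.single 0 1 - Finsupp.single 1 1
      + (Finsupp.single 0 2 + Finsupp.single 1 1) = m + Finsupp.single 0 1 := by
    ext x
    fin_cases x <;>
      simp only [Finsupp.add_apply, Finsupp.tsub_apply, Finsupp.single_apply] <;>
      simp <;> omega
  have i2 : m - Finsupp.single 0 1 - Finsupp.single 1 1
      + (Finsupp.single 0 1 + Finsupp.single 1 1) = m := by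
    ext x
    fin_cases x <;>
      simp only [Finsupp.add_apply, Finsupp.tsub_apply, Finsupp.single_apply] <;>
      simp <;> omega
  rw [e1, e2, mul_add, monomial_mul, monomial_mul, mul_one, i1, i2, mul_comm c a]


lemma aux_ker_subalg (a : k) (δ : Derivation k (MvPolynomial (Fin 2) k) (MvPolynomial (Fin 2) k))
    (hδ : δ = mkDerivation k ![(X 0 : MvPolynomial (Fin 2) k) * (X 0 + C a), C a * X 1]) :
    ∀ g ∈ Algebra.adjoin k ({X 0 ^ 2, X 1 ^ 2, X 0 ^ 2 * X 1 + C a * (X 0 * X 1)} :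
        Set (MvPolynomial (Fin 2) k)), δ g = 0 := by
  haveI : CharP (MvPolynomial (Fin 2) k) 2 := inferInstance
  have h2 : (2 : MvPolynomial (Fin 2) k) = 0 := by
    have := CharP.cast_eq_zero (MvPolynomial (Fin 2) k) 2
    simpa using this
  have hX0 : δ (X 0) = X 0 * (X 0 + C a) := by rw [hδ, mkDerivation_X]; simp
  have hX1 : δ (X 1) = C a * X 1 := by rw [hδ, mkDerivation_X]; simp
  have k1 : δ (X 0 ^ 2 : MvPolynomial (Fin 2) k) = 0 := by
    rw [pow_two, Derivation.leibniz]
    simp only [smul_eq_mul]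
    rw [← two_mul, h2, zero_mul]
  have k2 : δ (X 1 ^ 2 : MvPolynomial (Fin 2) k) = 0 := by
    rw [pow_two, Derivation.leibniz]
    simp only [smul_eq_mul]
    rw [← two_mul, h2, zero_mul]
  have k3 : δ (X 0 ^ 2 * X 1 + C a * (X 0 * X 1) : MvPolynomial (Fin 2) k) = 0 := by
    rw [map_add, Derivation.leibniz, Derivation.leibniz, Derivation.leibniz, k1,
      derivation_C]
    simp only [smul_eq_mul, smul_zero, mul_zero, zero_mul, add_zero, zero_add, hX0, hX1]
    linear_combination (C a * X 0 ^ 2 * X 1 + C a * C a * (X 0 * X 1)) * h2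
  intro g hg
  induction hg using Algebra.adjoin_induction with
  | mem x hx =>
    rcases hx with rfl | rfl | rfl
    · exact k1
    · exact k2
    · exact k3
  | algebraMap r => exact derivation_C δ r
  | add x y hx hy ihx ihy => rw [map_add, ihx, ihy, add_zero]
  | mul x y hx hy ihx ihy => rw [Derivation.leibniz, ihx, ihy, smul_zero, smul_zero, add_zero]


lemma aux_main (a : k) (ha : a ≠ 0)
    (δ : Derivation k (MvPolynomial (Fin 2) k) (MvPolynomial (Fin 2) k))
    (hδ : δ = mkDerivation k ![(X 0 : MvPolynomial (Fin 2) k) * (X 0 + C a), C a * X 1]) :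
    ∀ (n : ℕ) (f : MvPolynomial (Fin 2) k), f.support.card ≤ n → δ f = 0 →
      f ∈ Algebra.adjoin k ({X 0 ^ 2, X 1 ^ 2, X 0 ^ 2 * X 1 + C a * (X 0 * X 1)} :
        Set (MvPolynomial (Fin 2) k)) := by
  intro n
  induction n with
  | zero =>
    intro f hcard _
    have : f = 0 := by
      rw [← MvPolynomial.support_eq_empty]
      exact Finset.card_eq_zero.1 (Nat.le_zero.1 hcard)
    rw [this]; exact zero_mem _
  | succ n ih =>
    intro f hcard hf
    by_cases hf0 : f = 0
    · rw [hf0]; exact zero_mem _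
    obtain ⟨m, hm⟩ := MvPolynomial.support_nonempty.2 hf0
    have hmne : coeff m f ≠ 0 := mem_support_iff.1 hm
    have hrel : X 0 * (X 0 * pderiv 0 f) + C a * (X 0 * pderiv 0 f)
        + C a * (X 1 * pderiv 1 f) = 0 := by
      rw [← aux_happ a δ hδ f, hf]
    -- step: subtract a kernel element of the adjoin that removes m from the support
    have step : ∀ g : MvPolynomial (Fin 2) k,
        g ∈ Algebra.adjoin k ({X 0 ^ 2, X 1 ^ 2, X 0 ^ 2 * X 1 + C a * (X 0 * X 1)} :
          Set (MvPolynomial (Fin 2) k)) →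
        (f - g).support ⊆ f.support.erase m →
        f ∈ Algebra.adjoin k ({X 0 ^ 2, X 1 ^ 2, X 0 ^ 2 * X 1 + C a * (X 0 * X 1)} :
          Set (MvPolynomial (Fin 2) k)) := by
      intro g hgA hsub
      have hgker : δ g = 0 := aux_ker_subalg a δ hδ g hgA
      have hcard' : (f - g).support.card ≤ n := by
        have h1 : (f - g).support.card ≤ (f.support.erase m).card := Finset.card_le_card hsub
        rw [Finset.card_erase_of_mem hm] at h1
        omega
      have hker' : δ (f - g) = 0 := by rw [map_sub, hf, hgker, sub_zero]
      have hrec := ih (f - g) hcard' hker'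
      have hfg : f = (f - g) + g := by ring
      rw [hfg]; exact add_mem hrec hgA
    -- parity consequences
    have C1 : ∀ u : Fin 2 →₀ ℕ, ¬ Even (u 0) → Even (u 1) → coeff u f = 0 := by
      intro u hu0 hu1
      have hu0' : Odd (u 0) := Nat.not_even_iff_odd.1 hu0
      have hpos : 1 ≤ u 0 := Nat.one_le_iff_ne_zero.2 (by rintro h; rw [h] at hu0; simp at hu0)
      have hM := aux_master a f hrel (u - Finsupp.single 0 1)
      have e0 : ((u - Finsupp.single 0 1 : Fin 2 →₀ ℕ)) 0 = u 0 - 1 := by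
        simp [Finsupp.tsub_apply]
      have e1 : ((u - Finsupp.single 0 1 : Fin 2 →₀ ℕ)) 1 = u 1 := by
        simp [Finsupp.tsub_apply, Finsupp.single_apply]
      have e2 : (u - Finsupp.single 0 1) + Finsupp.single 0 1 = u := by
        rw [tsub_add_cancel_of_le]
        rwa [Finsupp.single_le_iff]
      rw [e0, e1, e2] at hM
      rw [aux_cast_even (Nat.Odd.sub_odd hu0' odd_one), zero_mul, zero_add,
        Nat.sub_add_cancel hpos, aux_cast_odd hu0', aux_cast_even hu1, add_zero, mul_one] at hM
      exact (mul_eq_zero.1 hM).resolve_left ha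
    have C0 : ∀ u : Fin 2 →₀ ℕ, u 0 = 0 → ¬ Even (u 1) → coeff u f = 0 := by
      intro u hu0 hu1
      have hZ := aux_zero a f hrel u hu0
      rw [aux_cast_odd (Nat.not_even_iff_odd.1 hu1), mul_one] at hZ
      exact (mul_eq_zero.1 hZ).resolve_left ha
    have C2 : ∀ u : Fin 2 →₀ ℕ, ¬ Even (u 0) → ¬ Even (u 1) →
        coeff (u + Finsupp.single 0 1) f = a⁻¹ * coeff u f := by
      intro u hu0 hu1
      have hM := aux_master a f hrel u
      rw [aux_cast_odd (Nat.not_even_iff_odd.1 hu0),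
        aux_cast_even (by simpa [Nat.even_add_one] using hu0),
        aux_cast_odd (Nat.not_even_iff_odd.1 hu1), one_mul, zero_add, mul_one] at hM
      have h2k : (2 : k) = 0 := CharTwo.two_eq_zero
      have key : a * coeff (u + Finsupp.single 0 1) f = coeff u f := by
        linear_combination hM - coeff u f * h2k
      rw [← key, inv_mul_cancel_left₀ ha]
    by_cases h1 : Even (m 1)
    · by_cases h0 : Even (m 0)
      · -- even-even monomial
        apply step (monomial m (coeff m f)) (aux_mono_mem a m _ h0 h1)
        intro x hx
        have hxne : coeff x (f - monomial m (coeff m f)) ≠ 0 := mem_support_iff.1 hx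
        have hxm : x ≠ m := by
          rintro rfl
          exact hxne (by rw [coeff_sub, coeff_monomial, if_pos rfl, sub_self])
        refine Finset.mem_erase.2 ⟨hxm, mem_support_iff.2 fun hc => hxne ?_⟩
        rw [coeff_sub, hc, coeff_monomial, if_neg (fun h => hxm h.symm), sub_zero]
      · exact absurd (C1 m h0 h1) hmne
    · -- m 1 odd
      obtain ⟨m', ho0, ho1, hmm⟩ : ∃ m' : Fin 2 →₀ ℕ, ¬ Even (m' 0) ∧ ¬ Even (m' 1)
          ∧ (m = m' ∨ m = m' + Finsupp.single 0 1) := by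
        by_cases h0 : Even (m 0)
        · have hpos : m 0 ≠ 0 := fun hz => hmne (C0 m hz h1)
          refine ⟨m - Finsupp.single 0 1, ?_, ?_, Or.inr ?_⟩
          · have e0 : ((m - Finsupp.single 0 1 : Fin 2 →₀ ℕ)) 0 = m 0 - 1 := by
              simp [Finsupp.tsub_apply]
            rw [e0]
            exact Nat.not_even_iff_odd.2 (Nat.Even.sub_odd
              (Nat.one_le_iff_ne_zero.2 hpos) h0 odd_one)
          · have e1 : ((m - Finsupp.single 0 1 : Fin 2 →₀ ℕ)) 1 = m 1 := by
              simp [Finsupp.tsub_apply, Finsupp.single_apply]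
            rwa [e1]
          · rw [tsub_add_cancel_of_le]
            rw [Finsupp.single_le_iff]
            exact Nat.one_le_iff_ne_zero.2 hpos
        · exact ⟨m, h0, h1, Or.inl rfl⟩
      have hm'0 : m' 0 ≠ 0 := fun hz => ho0 (by rw [hz]; exact Even.zero)
      have hm'1 : m' 1 ≠ 0 := fun hz => ho1 (by rw [hz]; exact Even.zero)
      set c' := coeff m' f with hc'
      set g := (monomial (m' - Finsupp.single 0 1 - Finsupp.single 1 1) (a⁻¹ * c')
          : MvPolynomial (Fin 2) k) * (X 0 ^ 2 * X 1 + C a * (X 0 * X 1)) with hg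
      have hgA : g ∈ Algebra.adjoin k ({X 0 ^ 2, X 1 ^ 2, X 0 ^ 2 * X 1 + C a * (X 0 * X 1)} :
          Set (MvPolynomial (Fin 2) k)) := by
        apply mul_mem
        · apply aux_mono_mem
          · have e0 : ((m' - Finsupp.single 0 1 - Finsupp.single 1 1 : Fin 2 →₀ ℕ)) 0
                = m' 0 - 1 := by simp [Finsupp.tsub_apply, Finsupp.single_apply]
            rw [e0]
            exact Nat.Odd.sub_odd (Nat.not_even_iff_odd.1 ho0) odd_one
          · have e1 : ((m' - Finsupp.single 0 1 - Finsupp.single 1 1 : Fin 2 →₀ ℕ)) 1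
                = m' 1 - 1 := by simp [Finsupp.tsub_apply, Finsupp.single_apply]
            rw [e1]
            exact Nat.Odd.sub_odd (Nat.not_even_iff_odd.1 ho1) odd_one
        · exact Algebra.subset_adjoin (by right; right; rfl)
      have hgexp : g = monomial (m' + Finsupp.single 0 1) (a⁻¹ * c') + monomial m' c' := by
        rw [hg, aux_w_expand a m' _ hm'0 hm'1, mul_inv_cancel_left₀ ha]
      have hne : m' ≠ m' + Finsupp.single 0 1 := by
        intro h
        have := congrArg (fun u : Fin 2 →₀ ℕ => u 0) h
        simp at this
      apply step g hgA
      intro x hx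
      have hxne : coeff x (f - g) ≠ 0 := mem_support_iff.1 hx
      have hx1 : x ≠ m' := by
        rintro rfl
        apply hxne
        rw [coeff_sub, hgexp, coeff_add, coeff_monomial, coeff_monomial,
          if_neg (fun h => hne h.symm), if_pos rfl, zero_add, sub_self]
      have hx2 : x ≠ m' + Finsupp.single 0 1 := by
        rintro rfl
        apply hxne
        rw [coeff_sub, hgexp, coeff_add, coeff_monomial, coeff_monomial,
          if_pos rfl, if_neg hne, add_zero, C2 m' ho0 ho1, sub_self]
      have hxm : x ≠ m := by
        rcases hmm with h | h
        · rw [h]; exact hx1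
        · rw [h]; exact hx2
      refine Finset.mem_erase.2 ⟨hxm, mem_support_iff.2 fun hc => hxne ?_⟩
      rw [coeff_sub, hc, hgexp, coeff_add, coeff_monomial, coeff_monomial,
        if_neg (fun h => hx2 h.symm), if_neg (fun h => hx1 h.symm), add_zero, sub_zero]

end Stmt2Aux

/-- For a ≠ 0 and δ = x(x+a)·∂/∂x + ay·∂/∂y, the kernel of δ equals
the k-subalgebra generated by x², y², x²y + axy. -/
theorem stmt_2 (k : Type*) [Field k] [IsAlgClosed k] [CharP k 2] (a : k) (ha : a ≠ 0)
    (δ : Derivation k (MvPolynomial (Fin 2) k) (MvPolynomial (Fin 2) k))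
    (hδ : δ = mkDerivation k ![(X 0 : MvPolynomial (Fin 2) k) * (X 0 + C a), C a * X 1]) :
    {f : MvPolynomial (Fin 2) k | δ f = 0} =
      ↑(Algebra.adjoin k ({X 0 ^ 2, X 1 ^ 2, X 0 ^ 2 * X 1 + C a * (X 0 * X 1)} :
          Set (MvPolynomial (Fin 2) k))) := by
  ext f
  simp only [Set.mem_setOf_eq, SetLike.mem_coe]
  constructor
  · intro hf
    exact aux_main a ha δ hδ f.support.card f le_rfl hf
  · intro hf
    exact aux_ker_subalg a δ hδ f hf
end

section
/- Let a ∈ k be nonzero. The k-subalgebra of k[x,y] generated by x², y² and x²y + axy is isomorphic, as a k-algebra, to k[X,Y,Z]/(Z² + X(X+a²)Y). -/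
open MvPolynomial

noncomputable section StmtAux

variable {k : Type*} [Field k]

/-- Evaluation map sending `X ↦ x², Y ↦ y², (poly var) ↦ x²y + axy`. -/
noncomputable def Φ (a : k) :
    Polynomial (MvPolynomial (Fin 2) k) →ₐ[k] MvPolynomial (Fin 2) k :=
  Polynomial.aevalTower (expand 2) (X 0 ^ 2 * X 1 + C a * (X 0 * X 1))

noncomputable def E (k : Type*) [Field k] :
    MvPolynomial (Fin 3) k ≃ₐ[k] Polynomial (MvPolynomial (Fin 2) k) :=
  (renameEquiv k (finRotate 3)).trans (finSuccEquiv k 2)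

variable {k : Type*} [Field k]

lemma expand_two_monomial (d : Fin 2 →₀ ℕ) (c : k) :
    expand 2 (monomial d c) = monomial (2 • d) c := by
  rw [expand_monomial, monomial_eq]

lemma expand_two_eq_sum (r : MvPolynomial (Fin 2) k) :
    expand 2 r = ∑ d ∈ r.support, monomial (2 • d) (coeff d r) := by
  conv_lhs => rw [r.as_sum]
  rw [map_sum]
  exact Finset.sum_congr rfl fun d _ => expand_two_monomial d _

lemma two_smul_inj {d d' : Fin 2 →₀ ℕ} (h : (2 : ℕ) • d = 2 • d') : d = d' := by
  ext i
  have := congrArg (fun f => f i) h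
  simp only [Finsupp.smul_apply, smul_eq_mul] at this
  omega

lemma coeff_expand_two_smul (r : MvPolynomial (Fin 2) k) (d : Fin 2 →₀ ℕ) :
    coeff (2 • d) (expand 2 r) = coeff d r := by
  rw [expand_two_eq_sum, coeff_sum]
  have : ∀ d' ∈ r.support, coeff (2 • d) (monomial (2 • d') (coeff d' r))
      = if d' = d then coeff d' r else 0 := by
    intro d' _
    rw [coeff_monomial]
    congr 1
    simp only [eq_iff_iff]
    constructor
    · exact fun h => two_smul_inj h
    · rintro rfl; rfl
  rw [Finset.sum_congr rfl this, Finset.sum_ite_eq' r.support d (fun d' => coeff d' r)]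
  split
  · rfl
  · next h => simp [MvPolynomial.notMem_support_iff.mp h]

lemma expand_two_eq_zero {r : MvPolynomial (Fin 2) k} (h : expand 2 r = 0) : r = 0 := by
  ext d
  rw [← coeff_expand_two_smul r d, h, coeff_zero, coeff_zero]

lemma coeff_expand_two_odd (r : MvPolynomial (Fin 2) k) (m : Fin 2 →₀ ℕ) (h : Odd (m 1)) :
    coeff m (expand 2 r) = 0 := by
  rw [expand_two_eq_sum, coeff_sum]
  refine Finset.sum_eq_zero fun d _ => ?_
  rw [coeff_monomial, if_neg]
  intro he
  have h2 : (2 • d) 1 = m 1 := by rw [he]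
  obtain ⟨n, hn⟩ := h
  simp only [Finsupp.smul_apply, smul_eq_mul] at h2
  omega

/-- "even in y" predicate closed under multiplication with "odd in y". -/
lemma coeff_mul_even_odd {p q : MvPolynomial (Fin 2) k}
    (hp : ∀ m : Fin 2 →₀ ℕ, Odd (m 1) → coeff m p = 0)
    (hq : ∀ m : Fin 2 →₀ ℕ, Even (m 1) → coeff m q = 0)
    (m : Fin 2 →₀ ℕ) (hm : Even (m 1)) : coeff m (p * q) = 0 := by
  rw [coeff_mul]
  refine Finset.sum_eq_zero fun x hx => ?_
  have hsum : x.1 1 + x.2 1 = m 1 := by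
    have := (Finset.HasAntidiagonal.mem_antidiagonal.mp hx)
    have := congrArg (fun f => f 1) this
    simpa using this
  rcases Nat.even_or_odd (x.1 1) with he | ho
  · obtain ⟨u, hu⟩ := he; obtain ⟨v, hv⟩ := hm
    have : Even (x.2 1) := ⟨v - u, by omega⟩
    rw [hq x.2 this, mul_zero]
  · rw [hp x.1 ho, zero_mul]

lemma coeff_z_even (a : k) (m : Fin 2 →₀ ℕ) (hm : Even (m 1)) :
    coeff m (X 0 ^ 2 * X 1 + C a * (X 0 * X 1) : MvPolynomial (Fin 2) k) = 0 := by
  have h1 : (X 0 ^ 2 * X 1 : MvPolynomial (Fin 2) k)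
      = monomial (Finsupp.single 0 2 + Finsupp.single 1 1) 1 := by
    rw [X_pow_eq_monomial, X, monomial_mul, mul_one]
  have h2 : (C a * (X 0 * X 1) : MvPolynomial (Fin 2) k)
      = monomial (Finsupp.single 0 1 + Finsupp.single 1 1) a := by
    rw [X, X, monomial_mul, C_apply, monomial_mul, mul_one, mul_one, zero_add]
  rw [h1, h2, coeff_add, coeff_monomial, coeff_monomial, if_neg, if_neg, add_zero]
  all_goals
    intro he
    have := congrArg (fun f => f 1) he
    simp [Finsupp.single_apply] at this
    obtain ⟨v, hv⟩ := hm
    omega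

lemma z_ne_zero (a : k) :
    (X 0 ^ 2 * X 1 + C a * (X 0 * X 1) : MvPolynomial (Fin 2) k) ≠ 0 := by
  intro h
  have := congrArg (coeff (Finsupp.single 0 2 + Finsupp.single 1 1)) h
  have h1 : (X 0 ^ 2 * X 1 : MvPolynomial (Fin 2) k)
      = monomial (Finsupp.single 0 2 + Finsupp.single 1 1) 1 := by
    rw [X_pow_eq_monomial, X, monomial_mul, mul_one]
  have h2 : (C a * (X 0 * X 1) : MvPolynomial (Fin 2) k)
      = monomial (Finsupp.single 0 1 + Finsupp.single 1 1) a := by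
    rw [X, X, monomial_mul, C_apply, monomial_mul, mul_one, mul_one, zero_add]
  rw [h1, h2, coeff_add, coeff_monomial, coeff_monomial, if_pos rfl, if_neg, add_zero,
    coeff_zero] at this
  · exact one_ne_zero this
  · intro he
    have := congrArg (fun f => f 0) he
    simp [Finsupp.single_apply] at this

lemma parity_key (a : k) (r₀ r₁ : MvPolynomial (Fin 2) k)
    (h : expand 2 r₁ * (X 0 ^ 2 * X 1 + C a * (X 0 * X 1)) + expand 2 r₀ = 0) :
    r₀ = 0 ∧ r₁ = 0 := by
  set z : MvPolynomial (Fin 2) k := X 0 ^ 2 * X 1 + C a * (X 0 * X 1) with hz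
  have hodd : ∀ m : Fin 2 →₀ ℕ, Even (m 1) → coeff m (expand 2 r₁ * z) = 0 :=
    coeff_mul_even_odd (coeff_expand_two_odd r₁) (coeff_z_even a)
  have h0 : expand 2 r₀ = 0 := by
    ext m
    have hc := congrArg (coeff m) h
    rw [coeff_add, coeff_zero] at hc
    rcases Nat.even_or_odd (m 1) with he | ho
    · rw [hodd m he, zero_add] at hc; simpa using hc
    · simpa using coeff_expand_two_odd r₀ m ho
  rw [h0, add_zero] at h
  rcases mul_eq_zero.mp h with h1 | h1
  · exact ⟨expand_two_eq_zero h0, expand_two_eq_zero h1⟩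
  · exact absurd h1 (z_ne_zero a)

lemma z_sq [CharP k 2] (a : k) :
    (X 0 ^ 2 * X 1 + C a * (X 0 * X 1) : MvPolynomial (Fin 2) k) ^ 2
      = expand 2 (X 0 * (X 0 + C (a ^ 2)) * X 1 : MvPolynomial (Fin 2) k) := by
  have : CharP (MvPolynomial (Fin 2) k) 2 := inferInstance
  rw [CharTwo.add_sq]
  simp only [map_mul, map_add, expand_X, expand_C]
  rw [C_pow]
  ring


lemma Φ_F [CharP k 2] (a : k) :
    Φ a (Polynomial.X ^ 2 + Polynomial.C (X 0 * (X 0 + C (a ^ 2)) * X 1)) = 0 := by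
  rw [map_add, map_pow, Φ, Polynomial.aevalTower_X, Polynomial.aevalTower_C, z_sq a]
  exact CharTwo.add_self_eq_zero _

lemma ker_Φ [CharP k 2] (a : k) :
    RingHom.ker (Φ a) = Ideal.span {Polynomial.X ^ 2
      + Polynomial.C (X 0 * (X 0 + C (a ^ 2)) * X 1)} := by
  set g : MvPolynomial (Fin 2) k := X 0 * (X 0 + C (a ^ 2)) * X 1 with hg
  set F : Polynomial (MvPolynomial (Fin 2) k) := Polynomial.X ^ 2 + Polynomial.C g with hF
  have hFm : F.Monic := by
    have : (Polynomial.C g).degree < (2 : ℕ) := lt_of_le_of_lt Polynomial.degree_C_le (by norm_num)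
    exact Polynomial.monic_X_pow_add this
  apply le_antisymm
  · intro p hp
    have hΦp : Φ a p = 0 := hp
    have hdiv := Polynomial.modByMonic_add_div p F
    set r := p %ₘ F with hr
    have hΦF : Φ a F = 0 := Φ_F a
    have hΦr : Φ a r = 0 := by
      have := congrArg (Φ a) hdiv
      rw [map_add, map_mul, hΦF, zero_mul, add_zero] at this
      rw [this, hΦp]
    have hdeg : r.degree ≤ 1 := by
      have hlt : r.degree < F.degree := Polynomial.degree_modByMonic_lt p hFm
      have hFdeg : F.degree = 2 := by
        rw [hF, Polynomial.degree_add_eq_left_of_degree_lt]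
        · exact_mod_cast Polynomial.degree_X_pow 2
        · rw [Polynomial.degree_X_pow]
          exact lt_of_le_of_lt Polynomial.degree_C_le (by norm_num)
      rw [hFdeg] at hlt
      exact Order.le_of_lt_succ (by exact_mod_cast hlt)
    have hrXC := Polynomial.eq_X_add_C_of_degree_le_one hdeg
    rw [hrXC] at hΦr
    rw [map_add, map_mul, Φ, Polynomial.aevalTower_X, Polynomial.aevalTower_C,
      Polynomial.aevalTower_C] at hΦr
    obtain ⟨h0, h1⟩ := parity_key a (r.coeff 0) (r.coeff 1) hΦr
    have hr0 : r = 0 := by rw [hrXC, h0, h1]; simp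
    rw [Ideal.mem_span_singleton']
    refine ⟨p /ₘ F, ?_⟩
    rw [mul_comm]
    conv_rhs => rw [← hdiv]
    rw [hr0, zero_add]
  · rw [Ideal.span_le, Set.singleton_subset_iff]
    exact Φ_F a


lemma E_X0 : E k (X 0) = Polynomial.C (X 0) := by
  rw [E, AlgEquiv.trans_apply, renameEquiv_apply, rename_X]
  have : finRotate 3 0 = (0 : Fin 2).succ := by decide
  rw [this, finSuccEquiv_X_succ]

lemma E_X1 : E k (X 1) = Polynomial.C (X 1) := by
  rw [E, AlgEquiv.trans_apply, renameEquiv_apply, rename_X]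
  have : finRotate 3 1 = (1 : Fin 2).succ := by decide
  rw [this, finSuccEquiv_X_succ]

lemma E_X2 : E k (X 2) = Polynomial.X := by
  rw [E, AlgEquiv.trans_apply, renameEquiv_apply, rename_X]
  have : finRotate 3 2 = (0 : Fin 3) := by decide
  rw [this, finSuccEquiv_X_zero]

lemma E_C (c : k) : E k (C c) = Polynomial.C (C c) := by
  have h := (E k).commutes c
  simpa [algebraMap_eq, Polynomial.algebraMap_apply] using h

lemma E_f (a : k) :
    E k ((X 2 : MvPolynomial (Fin 3) k) ^ 2 + X 0 * (X 0 + C (a ^ 2)) * X 1)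
      = Polynomial.X ^ 2 + Polynomial.C (X 0 * (X 0 + C (a ^ 2)) * X 1) := by
  rw [map_add, map_pow, map_mul, map_mul, map_add, E_X0, E_X1, E_X2, E_C, map_mul, map_mul,
    map_add]

lemma ΦE_eq (a : k) : (Φ a).comp (E k).toAlgHom
    = aeval ![X 0 ^ 2, X 1 ^ 2, X 0 ^ 2 * X 1 + C a * (X 0 * X 1)] := by
  apply MvPolynomial.algHom_ext
  intro i
  fin_cases i
  · show (Φ a) ((E k) (X 0)) = aeval _ (X 0)
    rw [E_X0, aeval_X]
    simp [Φ, Polynomial.aevalTower_C]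
  · show (Φ a) ((E k) (X 1)) = aeval _ (X 1)
    rw [E_X1, aeval_X]
    simp [Φ, Polynomial.aevalTower_C]
  · show (Φ a) ((E k) (X 2)) = aeval _ (X 2)
    rw [E_X2, aeval_X]
    simp [Φ, Polynomial.aevalTower_X]

end StmtAux

/-- For a ≠ 0, k[x², y², x²y + axy] ≅ k[X,Y,Z]/(Z² + X(X+a²)Y). -/
theorem stmt_3 (k : Type*) [Field k] [IsAlgClosed k] [CharP k 2] (a : k) (ha : a ≠ 0) :
    Nonempty
      ((Algebra.adjoin k ({X 0 ^ 2, X 1 ^ 2, X 0 ^ 2 * X 1 + C a * (X 0 * X 1)} :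
          Set (MvPolynomial (Fin 2) k))) ≃ₐ[k]
        (MvPolynomial (Fin 3) k ⧸
          Ideal.span {(X 2 : MvPolynomial (Fin 3) k) ^ 2 +
            X 0 * (X 0 + C (a ^ 2)) * X 1})) := by
  refine ⟨AlgEquiv.symm ?_⟩
  have e1 : (MvPolynomial (Fin 3) k ⧸
        Ideal.span {(X 2 : MvPolynomial (Fin 3) k) ^ 2 + X 0 * (X 0 + C (a ^ 2)) * X 1})
      ≃ₐ[k] (Polynomial (MvPolynomial (Fin 2) k) ⧸
        Ideal.span {Polynomial.X ^ 2 + Polynomial.C (X 0 * (X 0 + C (a ^ 2)) * X 1)}) := by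
    refine Ideal.quotientEquivAlg _ _ (E k) ?_
    rw [Ideal.map_span, Set.image_singleton]
    congr 1
    exact congrArg _ (E_f a).symm
  have e2 : (Polynomial (MvPolynomial (Fin 2) k) ⧸
        Ideal.span {Polynomial.X ^ 2 + Polynomial.C (X 0 * (X 0 + C (a ^ 2)) * X 1)})
      ≃ₐ[k] (Polynomial (MvPolynomial (Fin 2) k) ⧸ RingHom.ker (Φ a)) :=
    Ideal.quotientEquivAlgOfEq k (ker_Φ a).symm
  have e3 := Ideal.quotientKerEquivRange (Φ a)
  have hrange : (Φ a).range
      = Algebra.adjoin k ({X 0 ^ 2, X 1 ^ 2, X 0 ^ 2 * X 1 + C a * (X 0 * X 1)} :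
          Set (MvPolynomial (Fin 2) k)) := by
    have h1 : ((Φ a).comp (E k).toAlgHom).range = (Φ a).range := by
      rw [AlgHom.range_comp]
      have h2 : (E k).toAlgHom.range = ⊤ := by
        rw [AlgHom.range_eq_top]
        exact (E k).surjective
      rw [h2, Algebra.map_top]
    have hset : ({X 0 ^ 2, X 1 ^ 2, X 0 ^ 2 * X 1 + C a * (X 0 * X 1)} :
          Set (MvPolynomial (Fin 2) k))
        = Set.range ![X 0 ^ 2, X 1 ^ 2, X 0 ^ 2 * X 1 + C a * (X 0 * X 1)] := by
      rw [Matrix.range_cons, Matrix.range_cons, Matrix.range_cons, Matrix.range_empty,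
        Set.union_empty, Set.singleton_union, Set.singleton_union]
    rw [← h1, ΦE_eq a, hset, Algebra.adjoin_range_eq_range_aeval]
  exact (e1.trans e2).trans (e3.trans (Subalgebra.equivOfEq _ _ hrange))
end

section
/- Let a ∈ k be nonzero and let R = k[X,Y,Z]/(Z² + X(X+a²)Y). Then the completion of R at the maximal ideal generated by the images of X, Y, Z is isomorphic, as a k-algebra, to k[[X,Y,Z]]/(Z² + XY). -/
set_option synthInstance.maxHeartbeats 1000000
set_option maxHeartbeats 1600000

namespace Stmt4Aux

open MvPowerSeries Finsupp

variable {k : Type*} [CommRing k]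

/-- Total-degree truncation of a multivariate power series (in finitely many variables). -/
noncomputable def dtrunc (n : ℕ) (F : MvPowerSeries (Fin 3) k) : MvPolynomial (Fin 3) k :=
  ∑ d ∈ ((Finsupp.finite_of_degree_le (σ := Fin 3) n).toFinset.filter
      fun d => d.degree < n),
    MvPolynomial.monomial d (MvPowerSeries.coeff d F)

theorem coeff_dtrunc (n : ℕ) (F : MvPowerSeries (Fin 3) k) (d : Fin 3 →₀ ℕ) :
    (dtrunc n F).coeff d = if d.degree < n then MvPowerSeries.coeff d F else 0 := by
  rw [dtrunc, MvPolynomial.coeff_sum]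
  simp only [MvPolynomial.coeff_monomial]
  rw [Finset.sum_ite_eq' (((Finsupp.finite_of_degree_le (σ := Fin 3) n).toFinset.filter
      fun d => d.degree < n)) d (fun d => MvPowerSeries.coeff d F)]
  simp only [Finset.mem_filter, Set.Finite.mem_toFinset, Set.mem_setOf_eq]
  by_cases h : d.degree < n
  · rw [if_pos ⟨h.le, h⟩, if_pos h]
  · rw [if_neg (fun hh => h hh.2), if_neg h]

/-- "low-vanishing": all coefficients in total degree `< n` vanish. -/
def lv (n : ℕ) (F : MvPowerSeries (Fin 3) k) : Prop :=
  ∀ d : Fin 3 →₀ ℕ, d.degree < n → MvPowerSeries.coeff d F = 0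

theorem lv_zero (n : ℕ) : lv n (0 : MvPowerSeries (Fin 3) k) := by
  intro d _; simp

theorem lv_add {n : ℕ} {F G : MvPowerSeries (Fin 3) k} (hF : lv n F) (hG : lv n G) :
    lv n (F + G) := by
  intro d hd; simp [hF d hd, hG d hd]

theorem lv_neg {n : ℕ} {F : MvPowerSeries (Fin 3) k} (hF : lv n F) : lv n (-F) := by
  intro d hd; simp [hF d hd]

theorem lv_sub {n : ℕ} {F G : MvPowerSeries (Fin 3) k} (hF : lv n F) (hG : lv n G) :
    lv n (F - G) := by
  rw [sub_eq_add_neg]; exact lv_add hF (lv_neg hG)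

theorem lv_mono {n m : ℕ} (h : m ≤ n) {F : MvPowerSeries (Fin 3) k} (hF : lv n F) : lv m F :=
  fun d hd => hF d (lt_of_lt_of_le hd h)

theorem degree_add (d e : Fin 3 →₀ ℕ) : (d + e).degree = d.degree + e.degree := by
  simp [Finsupp.degree_eq_weight_one, map_add]

theorem lv_dtrunc_sub (n : ℕ) (F : MvPowerSeries (Fin 3) k) :
    lv n ((↑(dtrunc n F) : MvPowerSeries (Fin 3) k) - F) := by
  intro d hd
  rw [map_sub, MvPolynomial.coeff_coe, coeff_dtrunc, if_pos hd, sub_self]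

theorem lv_dtrunc_dtrunc {n m : ℕ} (h : m ≤ n) (F : MvPowerSeries (Fin 3) k) :
    lv m ((↑(dtrunc n F) : MvPowerSeries (Fin 3) k) - (↑(dtrunc m F) : MvPowerSeries (Fin 3) k)) := by
  intro d hd
  rw [map_sub, MvPolynomial.coeff_coe, MvPolynomial.coeff_coe, coeff_dtrunc, coeff_dtrunc,
    if_pos hd, if_pos (lt_of_lt_of_le hd h), sub_self]

theorem lv_dtrunc_mul (n : ℕ) (F G : MvPowerSeries (Fin 3) k) :
    lv n ((↑(dtrunc n (F * G)) : MvPowerSeries (Fin 3) k)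
      - (↑(dtrunc n F * dtrunc n G) : MvPowerSeries (Fin 3) k)) := by
  intro d hd
  rw [map_sub, MvPolynomial.coe_mul, MvPolynomial.coeff_coe, coeff_dtrunc, if_pos hd,
    MvPowerSeries.coeff_mul, MvPowerSeries.coeff_mul]
  rw [sub_eq_zero]
  apply Finset.sum_congr rfl
  intro p hp
  rw [Finset.HasAntidiagonal.mem_antidiagonal] at hp
  have h1 : p.1.degree < n := by
    have := degree_add p.1 p.2
    rw [hp] at this
    omega
  have h2 : p.2.degree < n := by
    have := degree_add p.1 p.2
    rw [hp] at this
    omega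
  rw [MvPolynomial.coeff_coe, MvPolynomial.coeff_coe, coeff_dtrunc, coeff_dtrunc,
    if_pos h1, if_pos h2]

theorem dtrunc_add (n : ℕ) (F G : MvPowerSeries (Fin 3) k) :
    dtrunc n (F + G) = dtrunc n F + dtrunc n G := by
  apply MvPolynomial.ext
  intro d
  simp only [MvPolynomial.coeff_add, coeff_dtrunc, map_add]
  split <;> simp

theorem lv_dtrunc_one (n : ℕ) :
    lv n ((↑(dtrunc n (1 : MvPowerSeries (Fin 3) k)) : MvPowerSeries (Fin 3) k) - 1) :=
  lv_dtrunc_sub n (1 : MvPowerSeries (Fin 3) k)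

end Stmt4Aux

namespace Stmt4Aux

open MvPowerSeries Finsupp

variable {k : Type*} [CommRing k]

/-- The ideal `(X,Y,Z)` in the polynomial ring. -/
noncomputable def Mp (k : Type*) [CommRing k] : Ideal (MvPolynomial (Fin 3) k) :=
  Ideal.span {MvPolynomial.X 0, MvPolynomial.X 1, MvPolynomial.X 2}

/-- The ideal `(X,Y,Z)` in the power series ring. -/
noncomputable def Ms (k : Type*) [CommRing k] : Ideal (MvPowerSeries (Fin 3) k) :=
  Ideal.span {MvPowerSeries.X 0, MvPowerSeries.X 1, MvPowerSeries.X 2}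

theorem X_mem_Mp (i : Fin 3) : MvPolynomial.X (R := k) i ∈ Mp k := by
  apply Ideal.subset_span
  fin_cases i <;> simp

theorem X_mem_Ms (i : Fin 3) : MvPowerSeries.X (R := k) i ∈ Ms k := by
  apply Ideal.subset_span
  fin_cases i <;> simp

theorem monomial_mem_Mp_pow {n : ℕ} {d : Fin 3 →₀ ℕ} (hd : n ≤ d.degree) (c : k) :
    MvPolynomial.monomial d c ∈ (Mp k) ^ n := by
  have h1 : (d.prod fun i e => (MvPolynomial.X i : MvPolynomial (Fin 3) k) ^ e)
      ∈ (Mp k) ^ d.degree := by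
    rw [Finsupp.prod, Finsupp.degree_apply, ← Finset.prod_pow_eq_pow_sum]
    exact Ideal.prod_mem_prod fun i _ => Ideal.pow_mem_pow (X_mem_Mp i) _
  have h2 : MvPolynomial.monomial d c ∈ (Mp k) ^ d.degree := by
    rw [MvPolynomial.monomial_eq]
    exact Ideal.mul_mem_left _ _ h1
  exact Ideal.pow_le_pow_right hd h2

theorem mem_Mp_pow_of_lv {n : ℕ} {p : MvPolynomial (Fin 3) k}
    (h : lv n (↑p : MvPowerSeries (Fin 3) k)) : p ∈ (Mp k) ^ n := by
  rw [← p.support_sum_monomial_coeff]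
  apply Ideal.sum_mem
  intro d hd
  apply monomial_mem_Mp_pow
  by_contra hc
  push_neg at hc
  have := h d hc
  rw [MvPolynomial.coeff_coe] at this
  exact (MvPolynomial.mem_support_iff.mp hd) this

/-- The ideal of power series of order at least `n`. -/
noncomputable def lvIdeal (n : ℕ) : Ideal (MvPowerSeries (Fin 3) k) where
  carrier := {F | lv n F}
  add_mem' := lv_add
  zero_mem' := lv_zero n
  smul_mem' := by
    intro c F hF d hd
    rw [smul_eq_mul, MvPowerSeries.coeff_mul]
    apply Finset.sum_eq_zero
    intro p hp
    rw [Finset.HasAntidiagonal.mem_antidiagonal] at hp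
    have h2 : p.2.degree < n := by
      have := degree_add p.1 p.2
      rw [hp] at this
      omega
    rw [hF p.2 h2, mul_zero]

theorem lvIdeal_mul_le (a b : ℕ) :
    (lvIdeal (k := k) a) * lvIdeal b ≤ lvIdeal (a + b) := by
  rw [Ideal.mul_le]
  intro F hF G hG d hd
  rw [MvPowerSeries.coeff_mul]
  apply Finset.sum_eq_zero
  intro p hp
  rw [Finset.HasAntidiagonal.mem_antidiagonal] at hp
  have hdeg := degree_add p.1 p.2
  rw [hp] at hdeg
  by_cases h1 : p.1.degree < a
  · rw [hF p.1 h1, zero_mul]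
  · have h2 : p.2.degree < b := by omega
    rw [hG p.2 h2, mul_zero]

theorem Ms_pow_le_lvIdeal (n : ℕ) : (Ms k) ^ n ≤ lvIdeal n := by
  induction n with
  | zero => intro F _; intro d hd; omega
  | succ n ih =>
      have h1 : Ms k ≤ lvIdeal 1 := by
        rw [Ms, Ideal.span_le]
        intro x hx
        simp only [Set.mem_insert_iff, Set.mem_singleton_iff] at hx
        rcases hx with h | h | h <;>
        · subst h
          intro d hd
          have hd0 : d = 0 := by
            rwa [Nat.lt_one_iff, Finsupp.degree_eq_zero_iff] at hd
          subst hd0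
          rw [MvPowerSeries.X_def, MvPowerSeries.coeff_monomial, if_neg]
          exact fun hh => one_ne_zero (Finsupp.single_eq_zero.mp hh.symm)
      calc (Ms k) ^ (n + 1) = (Ms k) ^ n * Ms k := pow_succ _ _
        _ ≤ lvIdeal n * lvIdeal 1 := Ideal.mul_mono ih h1
        _ ≤ lvIdeal (n + 1) := lvIdeal_mul_le n 1

theorem lv_of_mem_Ms_pow {n : ℕ} {F : MvPowerSeries (Fin 3) k} (h : F ∈ (Ms k) ^ n) :
    lv n F := Ms_pow_le_lvIdeal n h

end Stmt4Aux

namespace Stmt4Aux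

open MvPowerSeries Finsupp

variable {k : Type*} [CommRing k]

theorem degree_single (i : Fin 3) : (Finsupp.single i 1 : Fin 3 →₀ ℕ).degree = 1 := by
  rw [Finsupp.degree_apply, Finsupp.support_single_ne_zero i one_ne_zero, Finset.sum_singleton,
    Finsupp.single_eq_same]

theorem coeff_X_mul' (i : Fin 3) (G : MvPowerSeries (Fin 3) k) (m : Fin 3 →₀ ℕ) :
    MvPowerSeries.coeff m (MvPowerSeries.X i * G) =
      if Finsupp.single i 1 ≤ m then MvPowerSeries.coeff (m - Finsupp.single i 1) G else 0 := by
  rw [MvPowerSeries.X_def, MvPowerSeries.coeff_monomial_mul]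
  split <;> simp

theorem mem_Ms_pow_of_lv : ∀ {n : ℕ} {F : MvPowerSeries (Fin 3) k}, lv n F → F ∈ (Ms k) ^ n := by
  intro n
  induction n with
  | zero => intro F _; simp
  | succ n ih =>
    intro F h
    set G0 : MvPowerSeries (Fin 3) k := fun d => F (d + Finsupp.single 0 1) with hG0def
    set G1 : MvPowerSeries (Fin 3) k :=
      fun d => if d 0 = 0 then F (d + Finsupp.single 1 1) else 0 with hG1def
    set G2 : MvPowerSeries (Fin 3) k :=
      fun d => if d 0 = 0 ∧ d 1 = 0 then F (d + Finsupp.single 2 1) else 0 with hG2def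
    have key : ∀ (i : Fin 3) (G : MvPowerSeries (Fin 3) k) (m : Fin 3 →₀ ℕ), m i ≠ 0 →
        MvPowerSeries.coeff m (MvPowerSeries.X i * G) =
          G (m - Finsupp.single i 1) := by
      intro i G m hmi
      rw [coeff_X_mul', if_pos (Finsupp.single_le_iff.mpr (Nat.one_le_iff_ne_zero.mpr hmi))]
      rfl
    have keyz : ∀ (i : Fin 3) (G : MvPowerSeries (Fin 3) k) (m : Fin 3 →₀ ℕ), m i = 0 →
        MvPowerSeries.coeff m (MvPowerSeries.X i * G) = 0 := by
      intro i G m hmi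
      rw [coeff_X_mul', if_neg]
      rw [Finsupp.single_le_iff, hmi]
      omega
    have hsub : ∀ (i : Fin 3) (m : Fin 3 →₀ ℕ), m i ≠ 0 →
        (m - Finsupp.single i 1) + Finsupp.single i 1 = m := by
      intro i m hmi
      exact tsub_add_cancel_of_le (Finsupp.single_le_iff.mpr (Nat.one_le_iff_ne_zero.mpr hmi))
    have hsubap : ∀ (i j : Fin 3) (m : Fin 3 →₀ ℕ), i ≠ j →
        (m - Finsupp.single i 1 : Fin 3 →₀ ℕ) j = m j := by
      intro i j m hij
      rw [Finsupp.tsub_apply, Finsupp.single_eq_of_ne hij.symm]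
      omega
    have hdec : F = MvPowerSeries.X 0 * G0 + MvPowerSeries.X 1 * G1
        + MvPowerSeries.X 2 * G2 := by
      ext m
      rw [map_add, map_add]
      by_cases h0 : m 0 = 0
      · rw [keyz 0 G0 m h0]
        by_cases h1 : m 1 = 0
        · rw [keyz 1 G1 m h1]
          by_cases h2 : m 2 = 0
          · have hm : m = 0 := by
              ext j
              fin_cases j <;> assumption
            rw [keyz 2 G2 m h2, hm]
            have : MvPowerSeries.coeff 0 F = 0 := h 0 (by simp)
            rw [MvPowerSeries.coeff_apply] at this
            rw [MvPowerSeries.coeff_apply, this]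
            ring
          · rw [key 2 G2 m h2, hG2def]
            simp only
            rw [if_pos ⟨by rw [hsubap 2 0 m (by decide)]; exact h0,
              by rw [hsubap 2 1 m (by decide)]; exact h1⟩, hsub 2 m h2]
            rw [MvPowerSeries.coeff_apply]
            ring
        · rw [key 1 G1 m h1, hG1def]
          simp only
          rw [if_pos (by rw [hsubap 1 0 m (by decide)]; exact h0), hsub 1 m h1]
          have h2 : MvPowerSeries.coeff m (MvPowerSeries.X 2 * G2) = 0 := by
            by_cases hm2 : m 2 = 0
            · exact keyz 2 G2 m hm2
            · rw [key 2 G2 m hm2, hG2def]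
              simp only
              rw [if_neg]
              intro hc
              rw [hsubap 2 1 m (by decide)] at hc
              exact h1 hc.2
          rw [h2, MvPowerSeries.coeff_apply]
          ring
      · rw [key 0 G0 m h0, hG0def]
        simp only
        rw [hsub 0 m h0]
        have h1 : MvPowerSeries.coeff m (MvPowerSeries.X 1 * G1) = 0 := by
          by_cases hm1 : m 1 = 0
          · exact keyz 1 G1 m hm1
          · rw [key 1 G1 m hm1, hG1def]
            simp only
            rw [if_neg]
            intro hc
            rw [hsubap 1 0 m (by decide)] at hc
            exact h0 hc
        have h2 : MvPowerSeries.coeff m (MvPowerSeries.X 2 * G2) = 0 := by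
          by_cases hm2 : m 2 = 0
          · exact keyz 2 G2 m hm2
          · rw [key 2 G2 m hm2, hG2def]
            simp only
            rw [if_neg]
            intro hc
            rw [hsubap 2 0 m (by decide)] at hc
            exact h0 hc.1
        rw [h1, h2, MvPowerSeries.coeff_apply]
        ring
    have hlv : ∀ i : Fin 3, ∀ d : Fin 3 →₀ ℕ, d.degree < n →
        (d + Finsupp.single i 1).degree < n + 1 := by
      intro i d hd
      rw [degree_add, degree_single]
      omega
    have hG0 : lv n G0 := by
      intro d hd
      rw [MvPowerSeries.coeff_apply]
      exact h _ (hlv 0 d hd)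
    have hG1 : lv n G1 := by
      intro d hd
      rw [MvPowerSeries.coeff_apply, hG1def]
      simp only
      split
      · exact h _ (hlv 1 d hd)
      · rfl
    have hG2 : lv n G2 := by
      intro d hd
      rw [MvPowerSeries.coeff_apply, hG2def]
      simp only
      split
      · exact h _ (hlv 2 d hd)
      · rfl
    rw [hdec, pow_succ']
    exact add_mem (add_mem (Ideal.mul_mem_mul (X_mem_Ms 0) (ih hG0))
      (Ideal.mul_mem_mul (X_mem_Ms 1) (ih hG1)))
      (Ideal.mul_mem_mul (X_mem_Ms 2) (ih hG2))

end Stmt4Aux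

namespace Stmt4Aux

open MvPowerSeries Finsupp

variable {k : Type*} [CommRing k]

theorem degree_single' (i : Fin 3) (c : ℕ) : (Finsupp.single i c : Fin 3 →₀ ℕ).degree = c := by
  rcases eq_or_ne c 0 with h | h
  · subst h; simp [Finsupp.single_zero]
  · rw [Finsupp.degree_apply, Finsupp.support_single_ne_zero i h, Finset.sum_singleton,
      Finsupp.single_eq_same]

/-- The polynomial `Z² + XY`. -/
noncomputable def gP (k : Type*) [CommRing k] : MvPolynomial (Fin 3) k :=
  MvPolynomial.X 2 ^ 2 + MvPolynomial.X 0 * MvPolynomial.X 1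

theorem coeff_gP (d : Fin 3 →₀ ℕ) :
    (gP k).coeff d = (if Finsupp.single 2 2 = d then (1 : k) else 0)
      + (if Finsupp.single 0 1 + Finsupp.single 1 1 = d then (1 : k) else 0) := by
  rw [gP, MvPolynomial.coeff_add, MvPolynomial.X_pow_eq_monomial,
    show (MvPolynomial.X 0 * MvPolynomial.X 1 : MvPolynomial (Fin 3) k)
      = MvPolynomial.monomial (Finsupp.single 0 1 + Finsupp.single 1 1) 1 by
        rw [MvPolynomial.X, MvPolynomial.X, MvPolynomial.monomial_mul, one_mul],
    MvPolynomial.coeff_monomial, MvPolynomial.coeff_monomial]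

theorem hom_gP {d : Fin 3 →₀ ℕ} (h : (gP k).coeff d ≠ 0) : d.degree = 2 := by
  rw [coeff_gP] at h
  by_cases h1 : Finsupp.single 2 2 = d
  · rw [← h1, degree_single']
  · by_cases h2 : Finsupp.single 0 1 + Finsupp.single 1 1 = d
    · rw [← h2, degree_add, degree_single', degree_single']
    · rw [if_neg h1, if_neg h2] at h
      simp at h

theorem gP_ne_zero [Nontrivial k] : gP k ≠ 0 := by
  intro h
  have := coeff_gP (k := k) (Finsupp.single 2 2)
  rw [h, MvPolynomial.coeff_zero, if_pos rfl, if_neg] at this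
  · simp at this
  · intro hc
    have := congrArg (fun e => e 2) hc
    simp [Finsupp.single_eq_same, Finsupp.single_eq_of_ne] at this

variable [IsDomain k]

theorem lv_of_gP_mul {n : ℕ} {K : MvPowerSeries (Fin 3) k}
    (h : lv n ((↑(gP k) : MvPowerSeries (Fin 3) k) * K)) : lv (n - 2) K := by
  intro d0 hd0
  by_contra hc
  set m := d0.degree with hm
  set Kp := dtrunc (m + 1) K - dtrunc m K with hKp
  have coeff_Kp : ∀ d : Fin 3 →₀ ℕ,
      Kp.coeff d = if d.degree = m then MvPowerSeries.coeff d K else 0 := by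
    intro d
    rw [hKp, MvPolynomial.coeff_sub, coeff_dtrunc, coeff_dtrunc]
    by_cases h1 : d.degree = m
    · rw [if_pos (by omega), if_neg (by omega), sub_zero, if_pos h1]
    · by_cases h2 : d.degree < m
      · rw [if_pos (by omega), if_pos h2, sub_self, if_neg h1]
      · rw [if_neg (by omega), if_neg h2, sub_zero, if_neg h1]
  have hKp_ne : Kp ≠ 0 := by
    intro h0
    apply hc
    have := coeff_Kp d0
    rw [h0, MvPolynomial.coeff_zero, if_pos rfl] at this
    exact this.symm
  have hQ_ne : gP k * Kp ≠ 0 := mul_ne_zero gP_ne_zero hKp_ne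
  obtain ⟨d', hd'⟩ := MvPolynomial.ne_zero_iff.mp hQ_ne
  have hom_Kp : ∀ d : Fin 3 →₀ ℕ, Kp.coeff d ≠ 0 → d.degree = m := by
    intro d hd
    rw [coeff_Kp] at hd
    by_cases h1 : d.degree = m
    · exact h1
    · rw [if_neg h1] at hd; simp at hd
  have hd'deg : d'.degree = 2 + m := by
    rw [MvPolynomial.coeff_mul] at hd'
    obtain ⟨p, hp, hpne⟩ := Finset.exists_ne_zero_of_sum_ne_zero hd'
    rw [Finset.HasAntidiagonal.mem_antidiagonal] at hp
    have h1 : (gP k).coeff p.1 ≠ 0 := fun hz => hpne (by rw [hz, zero_mul])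
    have h2 : Kp.coeff p.2 ≠ 0 := fun hz => hpne (by rw [hz, mul_zero])
    rw [← hp, degree_add, hom_gP h1, hom_Kp p.2 h2]
  have hcoeff : MvPowerSeries.coeff d'
      ((↑(gP k) : MvPowerSeries (Fin 3) k) * K) = (gP k * Kp).coeff d' := by
    rw [MvPowerSeries.coeff_mul, MvPolynomial.coeff_mul]
    apply Finset.sum_congr rfl
    intro p hp
    rw [Finset.HasAntidiagonal.mem_antidiagonal] at hp
    rw [MvPolynomial.coeff_coe]
    by_cases h1 : (gP k).coeff p.1 = 0
    · rw [h1, zero_mul, zero_mul]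
    · congr 1
      have hdeg1 : p.1.degree = 2 := hom_gP h1
      have hdeg2 : p.2.degree = m := by
        have := degree_add p.1 p.2
        rw [hp, hd'deg, hdeg1] at this
        omega
      rw [coeff_Kp, if_pos hdeg2]
  have hzero : MvPowerSeries.coeff d'
      ((↑(gP k) : MvPowerSeries (Fin 3) k) * K) = 0 := h d' (by omega)
  rw [hcoeff] at hzero
  exact hd' hzero

theorem eq_gP_mul_of_forall_lv {F : MvPowerSeries (Fin 3) k}
    (h : ∀ n : ℕ, ∃ Hn : MvPowerSeries (Fin 3) k,
      lv n (F - (↑(gP k) : MvPowerSeries (Fin 3) k) * Hn)) :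
    ∃ H : MvPowerSeries (Fin 3) k, F = (↑(gP k) : MvPowerSeries (Fin 3) k) * H := by
  choose Hn hHn using h
  have hdiff : ∀ n : ℕ, lv (n - 2) (Hn (n + 1) - Hn n) := by
    intro n
    apply lv_of_gP_mul
    have : (↑(gP k) : MvPowerSeries (Fin 3) k) * (Hn (n+1) - Hn n)
        = (F - ↑(gP k) * Hn n) - (F - ↑(gP k) * Hn (n+1)) := by ring
    rw [this]
    exact lv_sub (hHn n) (lv_mono (by omega) (hHn (n + 1)))
  set H : MvPowerSeries (Fin 3) k := fun d => MvPowerSeries.coeff d (Hn (d.degree + 3))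
    with hHdef
  have hstab : ∀ (d : Fin 3 →₀ ℕ) (n : ℕ), d.degree + 3 ≤ n →
      MvPowerSeries.coeff d (Hn n) = MvPowerSeries.coeff d (Hn (d.degree + 3)) := by
    intro d n hn
    induction n with
    | zero => omega
    | succ n ih =>
      rcases Nat.lt_or_ge (d.degree + 3) (n + 1) with hlt | hge
      · have hn' : d.degree + 3 ≤ n := by omega
        rw [← ih hn']
        have := hdiff n d (by omega)
        rw [map_sub, sub_eq_zero] at this
        exact this
      · have : d.degree + 3 = n + 1 := by omega
        rw [this]
  have hHlow : ∀ n : ℕ, lv (n - 2) ((Hn n) - H) := by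
    intro n d hd
    rw [map_sub, hHdef]
    have : MvPowerSeries.coeff d H = MvPowerSeries.coeff d (Hn (d.degree + 3)) := rfl
    rw [this, hstab d n (by omega), sub_self]
  refine ⟨H, ?_⟩
  have : ∀ d : Fin 3 →₀ ℕ, MvPowerSeries.coeff d
      (F - (↑(gP k) : MvPowerSeries (Fin 3) k) * H) = 0 := by
    intro d
    set n := d.degree + 3 with hn
    have hsplit : F - (↑(gP k) : MvPowerSeries (Fin 3) k) * H
        = (F - ↑(gP k) * Hn n) + ↑(gP k) * (Hn n - H) := by ring
    rw [hsplit, map_add, hHn n d (by omega)]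
    have h2 : (↑(gP k) : MvPowerSeries (Fin 3) k) * (Hn n - H) ∈ lvIdeal (n - 2) :=
      Ideal.mul_mem_left _ _ (hHlow n)
    rw [h2 d (by omega), add_zero]
  ext d
  have hd := this d
  rw [map_sub, sub_eq_zero] at hd
  rw [← hd]

end Stmt4Aux

namespace Stmt4Aux

open MvPowerSeries Finsupp

variable {k : Type*} [CommRing k]

/-- Quotient of the polynomial ring by one relation. -/
abbrev Aq (r : MvPolynomial (Fin 3) k) : Type _ := MvPolynomial (Fin 3) k ⧸ Ideal.span {r}

/-- The maximal ideal `(X,Y,Z)` in the quotient. -/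
noncomputable def mI (r : MvPolynomial (Fin 3) k) : Ideal (Aq r) :=
  Ideal.span {Ideal.Quotient.mk _ (MvPolynomial.X 0), Ideal.Quotient.mk _ (MvPolynomial.X 1),
    Ideal.Quotient.mk _ (MvPolynomial.X 2)}

variable (r : MvPolynomial (Fin 3) k)

theorem smul_top_eq (n : ℕ) : ((mI r) ^ n • ⊤ : Ideal (Aq r)) = (mI r) ^ n := by
  ext x; simp

theorem mI_eq_map : mI r = (Mp k).map (Ideal.Quotient.mk (Ideal.span {r})) := by
  rw [Mp, Ideal.map_span, mI]
  congr 1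
  rw [Set.image_insert_eq, Set.image_insert_eq, Set.image_singleton]

/-- The canonical projection from the polynomial ring to the `n`-th quotient. -/
noncomputable def qmk (n : ℕ) :
    MvPolynomial (Fin 3) k →+* (Aq r) ⧸ ((mI r) ^ n • ⊤ : Ideal (Aq r)) :=
  (Ideal.Quotient.mk _).comp (Ideal.Quotient.mk _)

theorem qmk_surjective (n : ℕ) : Function.Surjective (qmk r n) := by
  intro x
  obtain ⟨y, rfl⟩ := Ideal.Quotient.mk_surjective x
  obtain ⟨p, rfl⟩ := Ideal.Quotient.mk_surjective y
  exact ⟨p, rfl⟩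

theorem qmk_zero_of_mem {n : ℕ} {p : MvPolynomial (Fin 3) k} (hp : p ∈ (Mp k) ^ n) :
    qmk r n p = 0 := by
  rw [qmk, RingHom.comp_apply, Ideal.Quotient.eq_zero_iff_mem, smul_top_eq, mI_eq_map,
    ← Ideal.map_pow]
  exact Ideal.mem_map_of_mem _ hp

theorem qmk_zero_of_lv {n : ℕ} {p : MvPolynomial (Fin 3) k}
    (hp : lv n (↑p : MvPowerSeries (Fin 3) k)) : qmk r n p = 0 :=
  qmk_zero_of_mem r (mem_Mp_pow_of_lv hp)

theorem qmk_eq_of_lv {n : ℕ} {p q : MvPolynomial (Fin 3) k}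
    (hp : lv n ((↑p : MvPowerSeries (Fin 3) k) - (↑q : MvPowerSeries (Fin 3) k))) :
    qmk r n p = qmk r n q := by
  have h0 : qmk r n (p - q) = 0 := by
    apply qmk_zero_of_lv
    rwa [show ((↑(p - q) : MvPowerSeries (Fin 3) k)) = ↑p - ↑q from
      map_sub (MvPolynomial.coeToMvPowerSeries.ringHom) p q]
  rw [map_sub, sub_eq_zero] at h0
  exact h0

theorem qmk_rel (n : ℕ) : qmk r n r = 0 := by
  rw [qmk, RingHom.comp_apply, Ideal.Quotient.eq_zero_iff_mem.mpr
    (Ideal.subset_span (Set.mem_singleton r)), map_zero]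

theorem qmk_eq_zero_elim {n : ℕ} {p : MvPolynomial (Fin 3) k} (h : qmk r n p = 0) :
    ∃ c q : MvPolynomial (Fin 3) k, q ∈ (Mp k) ^ n ∧ p = c * r + q := by
  rw [qmk, RingHom.comp_apply, Ideal.Quotient.eq_zero_iff_mem, smul_top_eq, mI_eq_map,
    ← Ideal.map_pow] at h
  obtain ⟨q, hq, hmkq⟩ := Ideal.mem_map_iff_of_surjective _ Ideal.Quotient.mk_surjective |>.mp h
  have hpq : p - q ∈ Ideal.span {r} := by
    have h2 := (Ideal.span {r}).neg_mem (Ideal.Quotient.eq.mp hmkq)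
    rwa [neg_sub] at h2
  obtain ⟨c, hc⟩ := Ideal.mem_span_singleton'.mp hpq
  exact ⟨c, q, hq, by rw [hc]; ring⟩

theorem transition_qmk {m n : ℕ} (hmn : m ≤ n) (p : MvPolynomial (Fin 3) k) :
    AdicCompletion.transitionMap (mI r) (Aq r) hmn (qmk r n p) = qmk r m p := rfl

/-- The truncation homomorphism from power series into the adic completion of `k[X,Y,Z]/(r)`. -/
noncomputable def Phi : MvPowerSeries (Fin 3) k →+* AdicCompletion (mI r) (Aq r) where
  toFun F := ⟨fun n => qmk r n (dtrunc n F), by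
    intro m n hmn
    rw [transition_qmk]
    exact qmk_eq_of_lv r (lv_dtrunc_dtrunc hmn F)⟩
  map_one' := by
    apply Subtype.ext
    funext n
    show qmk r n (dtrunc n 1) = (1 : AdicCompletion (mI r) (Aq r)).val n
    rw [show (1 : AdicCompletion (mI r) (Aq r)).val n = qmk r n 1 from rfl]
    exact qmk_eq_of_lv r (by simpa using lv_dtrunc_one n)
  map_mul' F G := by
    apply Subtype.ext
    funext n
    show qmk r n (dtrunc n (F * G)) = qmk r n (dtrunc n F) * qmk r n (dtrunc n G)
    rw [← map_mul]
    exact qmk_eq_of_lv r (by simpa using lv_dtrunc_mul n F G)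
  map_zero' := by
    apply Subtype.ext
    funext n
    show qmk r n (dtrunc n 0) = 0
    apply qmk_zero_of_lv
    intro d hd
    rw [MvPolynomial.coeff_coe, coeff_dtrunc]
    split <;> simp
  map_add' F G := by
    apply Subtype.ext
    funext n
    show qmk r n (dtrunc n (F + G)) = qmk r n (dtrunc n F) + qmk r n (dtrunc n G)
    rw [dtrunc_add, map_add]

theorem Phi_val (F : MvPowerSeries (Fin 3) k) (n : ℕ) :
    (Phi r F).val n = qmk r n (dtrunc n F) := rfl

theorem Phi_coe (p : MvPolynomial (Fin 3) k) (n : ℕ) :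
    (Phi r (↑p : MvPowerSeries (Fin 3) k)).val n = qmk r n p := by
  rw [Phi_val]
  exact qmk_eq_of_lv r (lv_dtrunc_sub n (↑p : MvPowerSeries (Fin 3) k))

end Stmt4Aux

namespace Stmt4Aux

open MvPowerSeries Finsupp

variable {k : Type*} [CommRing k]

theorem lv_coe_of_mem_Mp {n : ℕ} {p : MvPolynomial (Fin 3) k} (hp : p ∈ (Mp k) ^ n) :
    lv n (↑p : MvPowerSeries (Fin 3) k) := by
  apply lv_of_mem_Ms_pow (n := n)
  have h1 : (↑p : MvPowerSeries (Fin 3) k)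
      ∈ Ideal.map (MvPolynomial.coeToMvPowerSeries.ringHom (σ := Fin 3) (R := k)) ((Mp k) ^ n) :=
    Ideal.mem_map_of_mem _ hp
  rw [Ideal.map_pow] at h1
  refine Ideal.pow_right_mono ?_ n h1
  rw [Mp, Ideal.map_span, Ms]
  apply Ideal.span_mono
  rw [Set.image_insert_eq, Set.image_insert_eq, Set.image_singleton]
  intro x hx
  simp only [Set.mem_insert_iff, Set.mem_singleton_iff] at hx ⊢
  rcases hx with h | h | h <;> subst h
  · exact Or.inl (MvPolynomial.coe_X 0)
  · exact Or.inr (Or.inl (MvPolynomial.coe_X 1))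
  · exact Or.inr (Or.inr (MvPolynomial.coe_X 2))

variable (r : MvPolynomial (Fin 3) k)

theorem Phi_surjective : Function.Surjective (Phi r) := by
  intro x
  have hrep : ∀ n, ∃ p : MvPolynomial (Fin 3) k, qmk r n p = x.val n :=
    fun n => qmk_surjective r n (x.val n)
  choose rp hrp using hrep
  have hdiff : ∀ n : ℕ, qmk r n (rp (n + 1) - rp n) = 0 := by
    intro n
    have h1 : qmk r n (rp (n + 1)) = x.val n := by
      rw [← transition_qmk r (Nat.le_succ n) (rp (n + 1)), hrp (n + 1), x.property (Nat.le_succ n)]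
    rw [map_sub, h1, hrp n, sub_self]
  have hdec : ∀ n : ℕ, ∃ c q : MvPolynomial (Fin 3) k,
      q ∈ (Mp k) ^ n ∧ rp (n + 1) - rp n = c * r + q :=
    fun n => qmk_eq_zero_elim r (hdiff n)
  choose cs qs hqs hrpq using hdec
  set s : ℕ → MvPolynomial (Fin 3) k := fun n => rp 1 + ∑ i ∈ Finset.Ico 1 n, qs i with hs
  have hsucc : ∀ n : ℕ, 1 ≤ n → s (n + 1) = s n + qs n := by
    intro n h1
    rw [hs]
    simp only
    rw [Finset.sum_Ico_succ_top h1, add_assoc]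
  have hsrel : ∀ n : ℕ, 1 ≤ n → ∃ c : MvPolynomial (Fin 3) k, s n - rp n = c * r := by
    intro n hn
    induction n with
    | zero => omega
    | succ n ih =>
      rcases Nat.lt_or_ge n 1 with h1 | h1
      · have hn1 : n = 0 := by omega
        subst hn1
        refine ⟨0, ?_⟩
        rw [hs]
        simp
      · obtain ⟨c, hc⟩ := ih h1
        refine ⟨c - cs n, ?_⟩
        rw [hsucc n h1, show rp (n + 1) = rp n + (cs n * r + qs n) by rw [← hrpq n]; ring,
          show s n = rp n + c * r by rw [← hc]; ring]
        ring
  have hqmk_s : ∀ n : ℕ, 1 ≤ n → qmk r n (s n) = x.val n := by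
    intro n hn
    obtain ⟨c, hc⟩ := hsrel n hn
    have heq : qmk r n (s n) = qmk r n (rp n) := by
      have h0 : qmk r n (s n - rp n) = 0 := by
        rw [hc, map_mul, qmk_rel]; exact mul_zero ((qmk r n) c)
      rw [map_sub, sub_eq_zero] at h0
      exact h0
    rw [heq, hrp n]
  have hstab : ∀ (d : Fin 3 →₀ ℕ) (mm n : ℕ), 1 ≤ mm → mm ≤ n → d.degree < mm →
      (s n).coeff d = (s mm).coeff d := by
    intro d mm n h1 hmn hd
    have hsum : s n - s mm = ∑ i ∈ Finset.Ico mm n, qs i := by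
      rw [hs]
      simp only
      rw [← Finset.sum_Ico_consecutive _ h1 hmn]
      ring
    have hz : (s n - s mm).coeff d = 0 := by
      rw [hsum, MvPolynomial.coeff_sum]
      apply Finset.sum_eq_zero
      intro i hi
      have hmi : mm ≤ i := (Finset.mem_Ico.mp hi).1
      have := lv_coe_of_mem_Mp (hqs i) d (lt_of_lt_of_le hd hmi)
      rwa [MvPolynomial.coeff_coe] at this
    rw [MvPolynomial.coeff_sub, sub_eq_zero] at hz
    exact hz
  set F : MvPowerSeries (Fin 3) k := fun d => (s (d.degree + 1)).coeff d with hF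
  refine ⟨F, ?_⟩
  apply Subtype.ext
  funext n
  rcases Nat.eq_zero_or_pos n with h0 | h1
  · subst h0
    have hsub : Subsingleton ((Aq r) ⧸ ((mI r) ^ 0 • ⊤ : Ideal (Aq r))) := by
      rw [Ideal.Quotient.subsingleton_iff, smul_top_eq]; simp
    exact Subsingleton.elim _ _
  · rw [Phi_val]
    rw [← hqmk_s n h1]
    apply qmk_eq_of_lv
    intro d hd
    rw [map_sub, MvPolynomial.coeff_coe, MvPolynomial.coeff_coe, coeff_dtrunc, if_pos hd]
    have hFd : MvPowerSeries.coeff d F = (s (d.degree + 1)).coeff d := rfl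
    rw [hFd, hstab d (d.degree + 1) n (by omega) (by omega) (by omega), sub_self]

theorem Phi_ker [IsDomain k] :
    RingHom.ker (Phi (gP k)) = Ideal.span {(↑(gP k) : MvPowerSeries (Fin 3) k)} := by
  apply le_antisymm
  · intro F hF
    rw [RingHom.mem_ker] at hF
    have hcomp : ∀ n : ℕ, qmk (gP k) n (dtrunc n F) = 0 := by
      intro n
      rw [← Phi_val, hF]
      rfl
    have hlow : ∀ n : ℕ, ∃ Hn : MvPowerSeries (Fin 3) k,
        lv n (F - (↑(gP k) : MvPowerSeries (Fin 3) k) * Hn) := by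
      intro n
      obtain ⟨c, q, hq, hdq⟩ := qmk_eq_zero_elim (gP k) (hcomp n)
      refine ⟨(↑c : MvPowerSeries (Fin 3) k), ?_⟩
      have hdq2 : (↑(dtrunc n F) : MvPowerSeries (Fin 3) k)
          = ↑(gP k) * ↑c + (↑q : MvPowerSeries (Fin 3) k) := by
        rw [← MvPolynomial.coe_mul, ← MvPolynomial.coe_add, MvPolynomial.coe_inj, hdq]
        ring
      have hsplit : F - (↑(gP k) : MvPowerSeries (Fin 3) k) * ↑c
          = (F - ↑(dtrunc n F)) + (↑q : MvPowerSeries (Fin 3) k) := by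
        rw [hdq2]; ring
      rw [hsplit]
      refine lv_add ?_ (lv_coe_of_mem_Mp hq)
      have h3 := lv_neg (lv_dtrunc_sub n F)
      rwa [neg_sub] at h3
    obtain ⟨H, hH⟩ := eq_gP_mul_of_forall_lv hlow
    rw [Ideal.mem_span_singleton]
    exact ⟨H, hH⟩
  · rw [Ideal.span_le]
    intro x hx
    rw [Set.mem_singleton_iff] at hx
    subst hx
    rw [SetLike.mem_coe, RingHom.mem_ker]
    apply Subtype.ext
    funext n
    rw [Phi_coe]
    exact qmk_rel (gP k) n

end Stmt4Aux

namespace Stmt4Aux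

open MvPowerSeries Finsupp

variable {k : Type*} [Field k]

theorem geom_unit {Q : Type*} [CommRing Q] (n : ℕ) (x u v : Q) (huv : v * u = 1)
    (hx : x ^ n = 0) :
    (x + u) * (v * ∑ i ∈ Finset.range n, (-v * x) ^ i) = 1 := by
  have h1 := geom_sum_mul (-v * x) n
  have h2 : (-v * x) ^ n = 0 := by
    rw [neg_mul, neg_pow, mul_pow, hx, mul_zero, mul_zero]
  set S := ∑ i ∈ Finset.range n, (-v * x) ^ i with hS
  linear_combination (-1 : Q) * h1 - h2 + S * huv

/-- The polynomial `f = Z² + X(X+a²)Y`. -/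
noncomputable def fP (a : k) : MvPolynomial (Fin 3) k :=
  MvPolynomial.X 2 ^ 2 + MvPolynomial.X 0 * (MvPolynomial.X 0 + MvPolynomial.C (a ^ 2))
    * MvPolynomial.X 1

/-- The substitution `X ↦ X, Y ↦ (X+a²)Y, Z ↦ Z`. -/
noncomputable def tau (a : k) : MvPolynomial (Fin 3) k →ₐ[k] MvPolynomial (Fin 3) k :=
  MvPolynomial.aeval
    ![MvPolynomial.X 0, (MvPolynomial.X 0 + MvPolynomial.C (a ^ 2)) * MvPolynomial.X 1,
      MvPolynomial.X 2]

/-- The truncated geometric series `W` with `(X + a²)·W ≡ 1 mod Xⁿ`. -/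
noncomputable def Wn (a : k) (n : ℕ) : MvPolynomial (Fin 3) k :=
  MvPolynomial.C ((a ^ 2)⁻¹) * ∑ i ∈ Finset.range n,
    (-(MvPolynomial.C ((a ^ 2)⁻¹)) * MvPolynomial.X 0) ^ i

/-- The substitution `X ↦ X, Y ↦ WY, Z ↦ Z`. -/
noncomputable def ups (a : k) (n : ℕ) : MvPolynomial (Fin 3) k →ₐ[k] MvPolynomial (Fin 3) k :=
  MvPolynomial.aeval
    ![MvPolynomial.X 0, Wn a n * MvPolynomial.X 1, MvPolynomial.X 2]

theorem tau_X0 (a : k) : tau a (MvPolynomial.X 0) = MvPolynomial.X 0 := by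
  rw [tau, MvPolynomial.aeval_X]; rfl

theorem tau_X1 (a : k) : tau a (MvPolynomial.X 1)
    = (MvPolynomial.X 0 + MvPolynomial.C (a ^ 2)) * MvPolynomial.X 1 := by
  rw [tau, MvPolynomial.aeval_X]; rfl

theorem tau_X2 (a : k) : tau a (MvPolynomial.X 2) = MvPolynomial.X 2 := by
  rw [tau, MvPolynomial.aeval_X]; rfl

theorem tau_C (a : k) (c : k) : tau a (MvPolynomial.C c) = MvPolynomial.C c := by
  rw [tau, MvPolynomial.aeval_C, MvPolynomial.algebraMap_eq]

theorem ups_X0 (a : k) (n : ℕ) : ups a n (MvPolynomial.X 0) = MvPolynomial.X 0 := by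
  rw [ups, MvPolynomial.aeval_X]; rfl

theorem ups_X1 (a : k) (n : ℕ) : ups a n (MvPolynomial.X 1) = Wn a n * MvPolynomial.X 1 := by
  rw [ups, MvPolynomial.aeval_X]; rfl

theorem ups_X2 (a : k) (n : ℕ) : ups a n (MvPolynomial.X 2) = MvPolynomial.X 2 := by
  rw [ups, MvPolynomial.aeval_X]; rfl

theorem ups_C (a : k) (n : ℕ) (c : k) : ups a n (MvPolynomial.C c) = MvPolynomial.C c := by
  rw [ups, MvPolynomial.aeval_C, MvPolynomial.algebraMap_eq]

theorem tau_gP (a : k) : tau a (gP k) = fP a := by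
  rw [gP, fP, map_add, map_pow, map_mul, tau_X0, tau_X1, tau_X2]
  ring

theorem tau_Wn (a : k) (n : ℕ) : tau a (Wn a n) = Wn a n := by
  rw [Wn, map_mul, map_sum, tau_C]
  congr 1
  apply Finset.sum_congr rfl
  intro i _
  rw [map_pow, map_mul, map_neg, tau_C, tau_X0]

/-- Substitutions preserving the maximal ideal preserve its powers. -/
theorem subst_mem_Mp_pow {ψ : MvPolynomial (Fin 3) k →ₐ[k] MvPolynomial (Fin 3) k}
    (hψ : ∀ i : Fin 3, ψ (MvPolynomial.X i) ∈ Mp k) {n : ℕ} {p : MvPolynomial (Fin 3) k}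
    (hp : p ∈ (Mp k) ^ n) : ψ p ∈ (Mp k) ^ n := by
  have h1 : ψ p ∈ Ideal.map ψ.toRingHom ((Mp k) ^ n) := Ideal.mem_map_of_mem _ hp
  rw [Ideal.map_pow] at h1
  refine Ideal.pow_right_mono ?_ n h1
  rw [Mp, Ideal.map_span]
  rw [Ideal.span_le]
  rintro x hx
  rw [Set.image_insert_eq, Set.image_insert_eq, Set.image_singleton] at hx
  simp only [Set.mem_insert_iff, Set.mem_singleton_iff] at hx
  rcases hx with h | h | h <;> subst h
  · exact hψ 0
  · exact hψ 1
  · exact hψ 2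

theorem tau_mem (a : k) {n : ℕ} {p : MvPolynomial (Fin 3) k} (hp : p ∈ (Mp k) ^ n) :
    tau a p ∈ (Mp k) ^ n := by
  refine subst_mem_Mp_pow ?_ hp
  intro i
  fin_cases i
  · show tau a (MvPolynomial.X 0) ∈ Mp k
    rw [tau_X0]; exact X_mem_Mp 0
  · show tau a (MvPolynomial.X 1) ∈ Mp k
    rw [tau_X1]; exact Ideal.mul_mem_left _ _ (X_mem_Mp 1)
  · show tau a (MvPolynomial.X 2) ∈ Mp k
    rw [tau_X2]; exact X_mem_Mp 2

theorem ups_mem (a : k) (n : ℕ) {m : ℕ} {p : MvPolynomial (Fin 3) k} (hp : p ∈ (Mp k) ^ m) :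
    ups a n p ∈ (Mp k) ^ m := by
  refine subst_mem_Mp_pow ?_ hp
  intro i
  fin_cases i
  · show ups a n (MvPolynomial.X 0) ∈ Mp k
    rw [ups_X0]; exact X_mem_Mp 0
  · show ups a n (MvPolynomial.X 1) ∈ Mp k
    rw [ups_X1]; exact Ideal.mul_mem_left _ _ (X_mem_Mp 1)
  · show ups a n (MvPolynomial.X 2) ∈ Mp k
    rw [ups_X2]; exact X_mem_Mp 2

theorem unit_level (r : MvPolynomial (Fin 3) k) (a : k) (ha : a ≠ 0) (n : ℕ) :
    qmk r n (MvPolynomial.X 0 + MvPolynomial.C (a ^ 2)) * qmk r n (Wn a n) = 1 := by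
  have hx : (qmk r n (MvPolynomial.X 0)) ^ n = 0 := by
    rw [← map_pow]
    exact qmk_zero_of_mem r (Ideal.pow_mem_pow (X_mem_Mp 0) n)
  have huv : qmk r n (MvPolynomial.C ((a ^ 2)⁻¹)) * qmk r n (MvPolynomial.C (a ^ 2)) = 1 := by
    rw [← map_mul, ← MvPolynomial.C_mul, inv_mul_cancel₀ (pow_ne_zero 2 ha),
      MvPolynomial.C_1, map_one]
  have := geom_unit n (qmk r n (MvPolynomial.X 0)) (qmk r n (MvPolynomial.C (a ^ 2)))
    (qmk r n (MvPolynomial.C ((a ^ 2)⁻¹))) huv hx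
  rw [map_add, Wn, map_mul, map_sum]
  convert this using 3
  simp

end Stmt4Aux

namespace Stmt4Aux

open MvPowerSeries Finsupp

variable {k : Type*} [Field k]

/-- Level map from the `g = Z²+XY` side to the `f = Z²+X(X+a²)Y` side. -/
noncomputable def eL (a : k) (n : ℕ) :
    (Aq (gP k)) ⧸ ((mI (gP k)) ^ n • ⊤ : Ideal (Aq (gP k)))
      →+* (Aq (fP a)) ⧸ ((mI (fP a)) ^ n • ⊤ : Ideal (Aq (fP a))) :=
  Ideal.Quotient.lift _
    (Ideal.Quotient.lift (Ideal.span {gP k}) ((qmk (fP a) n).comp (tau a).toRingHom)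
      (by
        intro x hx
        obtain ⟨c, rfl⟩ := Ideal.mem_span_singleton.mp hx
        show qmk (fP a) n (tau a (gP k * c)) = 0
        rw [map_mul, map_mul, tau_gP, qmk_rel]; exact zero_mul (qmk (fP a) n (tau a c))))
    (by
      intro x hx
      rw [smul_top_eq, mI_eq_map, ← Ideal.map_pow] at hx
      obtain ⟨q, hq, rfl⟩ :=
        (Ideal.mem_map_iff_of_surjective _ Ideal.Quotient.mk_surjective).mp hx
      rw [Ideal.Quotient.lift_mk]
      show qmk (fP a) n (tau a q) = 0
      exact qmk_zero_of_mem _ (tau_mem a hq))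

theorem eL_qmk (a : k) (n : ℕ) (p : MvPolynomial (Fin 3) k) :
    eL a n (qmk (gP k) n p) = qmk (fP a) n (tau a p) := rfl

theorem ups_fP (a : k) (ha : a ≠ 0) (n : ℕ) :
    qmk (gP k) n (ups a n (fP a)) = 0 := by
  have h1 : ups a n (fP a) = MvPolynomial.X 2 ^ 2 + (MvPolynomial.X 0 * MvPolynomial.X 1)
      * ((MvPolynomial.X 0 + MvPolynomial.C (a ^ 2)) * Wn a n) := by
    rw [fP, map_add, map_pow, map_mul, map_mul, map_add, ups_X0, ups_X1, ups_X2, ups_C]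
    ring
  have h2 : qmk (gP k) n ((MvPolynomial.X 0 + MvPolynomial.C (a ^ 2)) * Wn a n) = 1 := by
    rw [map_mul]; exact unit_level (gP k) a ha n
  rw [h1, map_add, map_mul, h2]
  rw [show ∀ y : (Aq (gP k)) ⧸ ((mI (gP k)) ^ n • ⊤ : Ideal (Aq (gP k))), y * 1 = y from fun y => mul_one y]
  rw [← map_add]
  show qmk (gP k) n (gP k) = 0
  exact qmk_rel _ _

/-- Level map from the `f` side to the `g` side. -/
noncomputable def uL (a : k) (ha : a ≠ 0) (n : ℕ) :
    (Aq (fP a)) ⧸ ((mI (fP a)) ^ n • ⊤ : Ideal (Aq (fP a)))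
      →+* (Aq (gP k)) ⧸ ((mI (gP k)) ^ n • ⊤ : Ideal (Aq (gP k))) :=
  Ideal.Quotient.lift _
    (Ideal.Quotient.lift (Ideal.span {fP a}) ((qmk (gP k) n).comp (ups a n).toRingHom)
      (by
        intro x hx
        obtain ⟨c, rfl⟩ := Ideal.mem_span_singleton.mp hx
        show qmk (gP k) n (ups a n (fP a * c)) = 0
        rw [map_mul, map_mul, ups_fP a ha n]; exact zero_mul (qmk (gP k) n (ups a n c))))
    (by
      intro x hx
      rw [smul_top_eq, mI_eq_map, ← Ideal.map_pow] at hx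
      obtain ⟨q, hq, rfl⟩ :=
        (Ideal.mem_map_iff_of_surjective _ Ideal.Quotient.mk_surjective).mp hx
      rw [Ideal.Quotient.lift_mk]
      show qmk (gP k) n (ups a n q) = 0
      exact qmk_zero_of_mem _ (ups_mem a n hq))

theorem uL_qmk (a : k) (ha : a ≠ 0) (n : ℕ) (p : MvPolynomial (Fin 3) k) :
    uL a ha n (qmk (fP a) n p) = qmk (gP k) n (ups a n p) := rfl

theorem uL_eL (a : k) (ha : a ≠ 0) (n : ℕ)
    (x : (Aq (gP k)) ⧸ ((mI (gP k)) ^ n • ⊤ : Ideal (Aq (gP k)))) :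
    uL a ha n (eL a n x) = x := by
  obtain ⟨p, rfl⟩ := qmk_surjective (gP k) n x
  rw [eL_qmk, uL_qmk]
  have hhom : (qmk (gP k) n).comp ((ups a n).toRingHom.comp (tau a).toRingHom)
      = qmk (gP k) n := by
    apply MvPolynomial.ringHom_ext
    · intro c
      simp only [RingHom.comp_apply, AlgHom.toRingHom_eq_coe, RingHom.coe_coe]
      rw [tau_C, ups_C]
    · intro i
      fin_cases i
      · show qmk (gP k) n (ups a n (tau a (MvPolynomial.X 0))) = qmk (gP k) n (MvPolynomial.X 0)
        rw [tau_X0, ups_X0]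
      · show qmk (gP k) n (ups a n (tau a (MvPolynomial.X 1))) = qmk (gP k) n (MvPolynomial.X 1)
        rw [tau_X1, map_mul, map_add, ups_X0, ups_C, ups_X1, map_mul, map_mul, ← mul_assoc,
          unit_level (gP k) a ha n]; exact one_mul (qmk (gP k) n (MvPolynomial.X 1))
      · show qmk (gP k) n (ups a n (tau a (MvPolynomial.X 2))) = qmk (gP k) n (MvPolynomial.X 2)
        rw [tau_X2, ups_X2]
  exact RingHom.congr_fun hhom p

theorem eL_uL (a : k) (ha : a ≠ 0) (n : ℕ)
    (x : (Aq (fP a)) ⧸ ((mI (fP a)) ^ n • ⊤ : Ideal (Aq (fP a)))) :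
    eL a n (uL a ha n x) = x := by
  obtain ⟨p, rfl⟩ := qmk_surjective (fP a) n x
  rw [uL_qmk, eL_qmk]
  have hhom : (qmk (fP a) n).comp ((tau a).toRingHom.comp (ups a n).toRingHom)
      = qmk (fP a) n := by
    apply MvPolynomial.ringHom_ext
    · intro c
      simp only [RingHom.comp_apply, AlgHom.toRingHom_eq_coe, RingHom.coe_coe]
      rw [ups_C, tau_C]
    · intro i
      fin_cases i
      · show qmk (fP a) n (tau a (ups a n (MvPolynomial.X 0))) = qmk (fP a) n (MvPolynomial.X 0)
        rw [ups_X0, tau_X0]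
      · show qmk (fP a) n (tau a (ups a n (MvPolynomial.X 1))) = qmk (fP a) n (MvPolynomial.X 1)
        rw [ups_X1, map_mul, tau_Wn, tau_X1, map_mul, map_mul, ← mul_assoc,
          mul_comm (qmk (fP a) n (Wn a n)) _, unit_level (fP a) a ha n]; exact one_mul (qmk (fP a) n (MvPolynomial.X 1))
      · show qmk (fP a) n (tau a (ups a n (MvPolynomial.X 2))) = qmk (fP a) n (MvPolynomial.X 2)
        rw [ups_X2, tau_X2]
  exact RingHom.congr_fun hhom p

theorem transition_eL (a : k) {m n : ℕ} (hmn : m ≤ n)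
    (x : (Aq (gP k)) ⧸ ((mI (gP k)) ^ n • ⊤ : Ideal (Aq (gP k)))) :
    AdicCompletion.transitionMap (mI (fP a)) (Aq (fP a)) hmn (eL a n x)
      = eL a m (AdicCompletion.transitionMap (mI (gP k)) (Aq (gP k)) hmn x) := by
  obtain ⟨p, rfl⟩ := qmk_surjective (gP k) n x
  rw [eL_qmk, transition_qmk, transition_qmk, eL_qmk]

theorem Wn_diff (a : k) {m n : ℕ} (hmn : m ≤ n) : Wn a n - Wn a m ∈ (Mp k) ^ m := by
  have hsplit : Wn a n - Wn a m = MvPolynomial.C ((a ^ 2)⁻¹)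
      * ∑ i ∈ Finset.Ico m n, (-(MvPolynomial.C ((a ^ 2)⁻¹)) * MvPolynomial.X 0) ^ i := by
    rw [Wn, Wn, ← mul_sub]
    congr 1
    rw [Finset.range_eq_Ico, Finset.range_eq_Ico,
      ← Finset.sum_Ico_consecutive
        (fun i => (-(MvPolynomial.C ((a ^ 2)⁻¹)) * MvPolynomial.X 0) ^ i) (Nat.zero_le m) hmn]
    ring
  rw [hsplit]
  apply Ideal.mul_mem_left
  apply Ideal.sum_mem
  intro i hi
  have him : m ≤ i := (Finset.mem_Ico.mp hi).1
  rw [mul_pow]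
  apply Ideal.mul_mem_left
  exact Ideal.pow_le_pow_right him (Ideal.pow_mem_pow (X_mem_Mp 0) i)

theorem qmk_ups_eq (r : MvPolynomial (Fin 3) k) (a : k) {m n : ℕ} (hmn : m ≤ n)
    (p : MvPolynomial (Fin 3) k) :
    qmk r m (ups a n p) = qmk r m (ups a m p) := by
  have hhom : (qmk r m).comp (ups a n).toRingHom = (qmk r m).comp (ups a m).toRingHom := by
    apply MvPolynomial.ringHom_ext
    · intro c
      simp only [RingHom.comp_apply, AlgHom.toRingHom_eq_coe, RingHom.coe_coe]
      rw [ups_C, ups_C]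
    · intro i
      fin_cases i
      · show qmk r m (ups a n (MvPolynomial.X 0)) = qmk r m (ups a m (MvPolynomial.X 0))
        rw [ups_X0, ups_X0]
      · show qmk r m (ups a n (MvPolynomial.X 1)) = qmk r m (ups a m (MvPolynomial.X 1))
        rw [ups_X1, ups_X1]
        have h0 : qmk r m ((Wn a n - Wn a m) * MvPolynomial.X 1) = 0 :=
          qmk_zero_of_mem r (Ideal.mul_mem_right _ _ (Wn_diff a hmn))
        rw [sub_mul, map_sub, sub_eq_zero] at h0
        exact h0
      · show qmk r m (ups a n (MvPolynomial.X 2)) = qmk r m (ups a m (MvPolynomial.X 2))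
        rw [ups_X2, ups_X2]
  exact RingHom.congr_fun hhom p

theorem transition_uL (a : k) (ha : a ≠ 0) {m n : ℕ} (hmn : m ≤ n)
    (x : (Aq (fP a)) ⧸ ((mI (fP a)) ^ n • ⊤ : Ideal (Aq (fP a)))) :
    AdicCompletion.transitionMap (mI (gP k)) (Aq (gP k)) hmn (uL a ha n x)
      = uL a ha m (AdicCompletion.transitionMap (mI (fP a)) (Aq (fP a)) hmn x) := by
  obtain ⟨p, rfl⟩ := qmk_surjective (fP a) n x
  rw [uL_qmk, transition_qmk, transition_qmk, uL_qmk]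
  exact qmk_ups_eq (gP k) a hmn p

/-- The induced map on adic completions, `g`-side to `f`-side. -/
noncomputable def EL (a : k) :
    AdicCompletion (mI (gP k)) (Aq (gP k)) →+* AdicCompletion (mI (fP a)) (Aq (fP a)) where
  toFun x := ⟨fun n => eL a n (x.val n), by
    intro m n hmn
    rw [transition_eL, x.property hmn]⟩
  map_one' := Subtype.ext (funext fun n => map_one (eL a n))
  map_mul' x y := Subtype.ext (funext fun n => map_mul (eL a n) (x.val n) (y.val n))
  map_zero' := Subtype.ext (funext fun n => map_zero (eL a n))
  map_add' x y := Subtype.ext (funext fun n => map_add (eL a n) (x.val n) (y.val n))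

/-- The induced map on adic completions, `f`-side to `g`-side. -/
noncomputable def UL (a : k) (ha : a ≠ 0) :
    AdicCompletion (mI (fP a)) (Aq (fP a)) →+* AdicCompletion (mI (gP k)) (Aq (gP k)) where
  toFun x := ⟨fun n => uL a ha n (x.val n), by
    intro m n hmn
    rw [transition_uL, x.property hmn]⟩
  map_one' := Subtype.ext (funext fun n => map_one (uL a ha n))
  map_mul' x y := Subtype.ext (funext fun n => map_mul (uL a ha n) (x.val n) (y.val n))
  map_zero' := Subtype.ext (funext fun n => map_zero (uL a ha n))
  map_add' x y := Subtype.ext (funext fun n => map_add (uL a ha n) (x.val n) (y.val n))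

/-- The ring isomorphism between the two adic completions. -/
noncomputable def Eequiv (a : k) (ha : a ≠ 0) :
    AdicCompletion (mI (gP k)) (Aq (gP k)) ≃+* AdicCompletion (mI (fP a)) (Aq (fP a)) :=
  RingEquiv.ofRingHom (EL a) (UL a ha)
    (RingHom.ext fun x => Subtype.ext (funext fun n => eL_uL a ha n (x.val n)))
    (RingHom.ext fun x => Subtype.ext (funext fun n => uL_eL a ha n (x.val n)))

theorem Eequiv_val (a : k) (ha : a ≠ 0) (x : AdicCompletion (mI (gP k)) (Aq (gP k))) (n : ℕ) :
    (Eequiv a ha x).val n = eL a n (x.val n) := rfl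

end Stmt4Aux

namespace Stmt4Aux

open MvPowerSeries Finsupp

variable {k : Type*} [Field k]

theorem gP_coe :
    ((↑(gP k)) : MvPowerSeries (Fin 3) k)
      = (MvPowerSeries.X 2 : MvPowerSeries (Fin 3) k) ^ 2
        + MvPowerSeries.X 0 * MvPowerSeries.X 1 := by
  rw [gP, MvPolynomial.coe_add, MvPolynomial.coe_pow, MvPolynomial.coe_mul, MvPolynomial.coe_X,
    MvPolynomial.coe_X, MvPolynomial.coe_X]

theorem Phi_ker' :
    RingHom.ker (Phi (gP k))
      = Ideal.span {(MvPowerSeries.X 2 : MvPowerSeries (Fin 3) k) ^ 2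
          + MvPowerSeries.X 0 * MvPowerSeries.X 1} := by
  rw [Phi_ker, gP_coe]

/-- The total ring equivalence. -/
noncomputable def totalEquiv (a : k) (ha : a ≠ 0) :
    (MvPowerSeries (Fin 3) k ⧸
        Ideal.span {(MvPowerSeries.X 2 : MvPowerSeries (Fin 3) k) ^ 2
          + MvPowerSeries.X 0 * MvPowerSeries.X 1})
      ≃+* AdicCompletion (mI (fP a)) (Aq (fP a)) :=
  (Ideal.quotEquivOfEq Phi_ker'.symm).trans
    ((RingHom.quotientKerEquivOfSurjective (Phi_surjective (gP k))).trans (Eequiv a ha))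

theorem totalEquiv_mk (a : k) (ha : a ≠ 0) (F : MvPowerSeries (Fin 3) k) :
    totalEquiv a ha (Ideal.Quotient.mk _ F) = Eequiv a ha (Phi (gP k) F) := by
  rw [totalEquiv, RingEquiv.trans_apply, RingEquiv.trans_apply, Ideal.quotEquivOfEq_mk]
  rfl

theorem algebraMap_Aq (r : MvPolynomial (Fin 3) k) (c : k) :
    algebraMap k (Aq r) c = Ideal.Quotient.mk _ (MvPolynomial.C c) := by
  rw [← MvPolynomial.algebraMap_eq, Ideal.Quotient.mk_algebraMap]

theorem algebraMap_T (c : k) :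
    algebraMap k (MvPowerSeries (Fin 3) k ⧸
        Ideal.span {(MvPowerSeries.X 2 : MvPowerSeries (Fin 3) k) ^ 2
          + MvPowerSeries.X 0 * MvPowerSeries.X 1}) c
      = Ideal.Quotient.mk _ ((↑(MvPolynomial.C c : MvPolynomial (Fin 3) k))
          : MvPowerSeries (Fin 3) k) := by
  have h1 : ((MvPolynomial.C c : MvPolynomial (Fin 3) k) : MvPowerSeries (Fin 3) k)
      = algebraMap k (MvPowerSeries (Fin 3) k) c := by
    rw [MvPolynomial.coe_C]
    simp [MvPowerSeries.algebraMap_apply]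
  rw [h1, Ideal.Quotient.mk_algebraMap]

theorem adic_val (r : MvPolynomial (Fin 3) k) (x : Aq r) (n : ℕ) :
    (algebraMap (Aq r) (AdicCompletion (mI r) (Aq r)) x).val n
      = Ideal.Quotient.mk ((mI r) ^ n • ⊤ : Ideal (Aq r)) x := by
  rfl

/-- The final algebra equivalence with the transported algebra structure. -/
noncomputable def finalEquiv (a : k) (ha : a ≠ 0) :
    letI instA : Algebra k (AdicCompletion (mI (fP a)) (Aq (fP a))) :=
      ((algebraMap (Aq (fP a)) (AdicCompletion (mI (fP a)) (Aq (fP a)))).comp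
        (algebraMap k (Aq (fP a)))).toAlgebra
    (AdicCompletion (mI (fP a)) (Aq (fP a))) ≃ₐ[k]
      (MvPowerSeries (Fin 3) k ⧸
        Ideal.span {(MvPowerSeries.X 2 : MvPowerSeries (Fin 3) k) ^ 2
          + MvPowerSeries.X 0 * MvPowerSeries.X 1}) := by
  letI instA : Algebra k (AdicCompletion (mI (fP a)) (Aq (fP a))) :=
    ((algebraMap (Aq (fP a)) (AdicCompletion (mI (fP a)) (Aq (fP a)))).comp
      (algebraMap k (Aq (fP a)))).toAlgebra
  refine AlgEquiv.ofRingEquiv (f := (totalEquiv a ha).symm) ?_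
  intro c
  have h1 : totalEquiv a ha (algebraMap k _ c)
      = algebraMap k (AdicCompletion (mI (fP a)) (Aq (fP a))) c := by
    rw [algebraMap_T, totalEquiv_mk]
    have h2 : algebraMap k (AdicCompletion (mI (fP a)) (Aq (fP a))) c
        = algebraMap (Aq (fP a)) (AdicCompletion (mI (fP a)) (Aq (fP a)))
            (algebraMap k (Aq (fP a)) c) := by
      rw [RingHom.algebraMap_toAlgebra, RingHom.comp_apply]
    rw [h2]
    apply Subtype.ext
    funext n
    rw [Eequiv_val, Phi_coe, eL_qmk, tau_C, adic_val, algebraMap_Aq]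
    rfl
  rw [← h1, RingEquiv.symm_apply_apply]

end Stmt4Aux

open MvPolynomial

/-- For a ≠ 0 and R = k[X,Y,Z]/(Z² + X(X+a²)Y), the completion of R at the
maximal ideal generated by the images of X, Y, Z is isomorphic, as a k-algebra, to
k[[X,Y,Z]]/(Z² + XY). -/
theorem stmt_4 (k : Type*) [Field k] [IsAlgClosed k] [CharP k 2] (a : k) (ha : a ≠ 0)
    (m : Ideal (MvPolynomial (Fin 3) k ⧸
        Ideal.span {(X 2 : MvPolynomial (Fin 3) k) ^ 2 + X 0 * (X 0 + C (a ^ 2)) * X 1}))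
    (hm : m = Ideal.span {Ideal.Quotient.mk _ (X 0), Ideal.Quotient.mk _ (X 1),
        Ideal.Quotient.mk _ (X 2)}) :
    letI : Algebra k (AdicCompletion m (MvPolynomial (Fin 3) k ⧸
        Ideal.span {(X 2 : MvPolynomial (Fin 3) k) ^ 2 + X 0 * (X 0 + C (a ^ 2)) * X 1})) :=
      ((algebraMap
          (MvPolynomial (Fin 3) k ⧸
            Ideal.span {(X 2 : MvPolynomial (Fin 3) k) ^ 2 + X 0 * (X 0 + C (a ^ 2)) * X 1})
          (AdicCompletion m (MvPolynomial (Fin 3) k ⧸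
            Ideal.span {(X 2 : MvPolynomial (Fin 3) k) ^ 2 +
              X 0 * (X 0 + C (a ^ 2)) * X 1}))).comp
        (algebraMap k _)).toAlgebra
    Nonempty
      ((AdicCompletion m (MvPolynomial (Fin 3) k ⧸
          Ideal.span {(X 2 : MvPolynomial (Fin 3) k) ^ 2 + X 0 * (X 0 + C (a ^ 2)) * X 1})) ≃ₐ[k]
        (MvPowerSeries (Fin 3) k ⧸
          Ideal.span {(MvPowerSeries.X 2 : MvPowerSeries (Fin 3) k) ^ 2 +
            MvPowerSeries.X 0 * MvPowerSeries.X 1})) := by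
  subst hm
  exact ⟨Stmt4Aux.finalEquiv a ha⟩
end

section
/- Let a ∈ k be nonzero and let δ be the k-derivation xy²·∂/∂x + (ax² + y³)·∂/∂y of k[x,y]. Then the composition δ ∘ δ, as a k-linear endomorphism of k[x,y], equals y²·δ, i.e. the map sending f to y²·δ(f). In particular δ is 2-closed. -/
open MvPolynomial

/-- For a ≠ 0 and δ = xy²·∂/∂x + (ax² + y³)·∂/∂y, the composite δ ∘ δ equals
the map f ↦ y²·δ(f); in particular δ is 2-closed. -/
theorem stmt_7 (k : Type*) [Field k] [IsAlgClosed k] [CharP k 2] (a : k) (ha : a ≠ 0)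
    (δ : Derivation k (MvPolynomial (Fin 2) k) (MvPolynomial (Fin 2) k))
    (hδ : δ = mkDerivation k
      ![(X 0 : MvPolynomial (Fin 2) k) * X 1 ^ 2, C a * X 0 ^ 2 + X 1 ^ 3]) :
    (∀ f : MvPolynomial (Fin 2) k, δ (δ f) = X 1 ^ 2 * δ f) ∧
      ∃ h : MvPolynomial (Fin 2) k, ∀ f : MvPolynomial (Fin 2) k, δ (δ f) = h * δ f := by
  haveI : CharP (MvPolynomial (Fin 2) k) 2 := inferInstance
  have h2 : (2 : MvPolynomial (Fin 2) k) = 0 := CharTwo.two_eq_zero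
  have h0 : δ (X 0) = X 0 * X 1 ^ 2 := by
    rw [hδ, mkDerivation_X]; simp
  have h1 : δ (X 1) = C a * X 0 ^ 2 + X 1 ^ 3 := by
    rw [hδ, mkDerivation_X]; simp
  -- δ ∘ δ is a derivation in characteristic 2
  set D : Derivation k (MvPolynomial (Fin 2) k) (MvPolynomial (Fin 2) k) :=
    { toLinearMap := δ.toLinearMap ∘ₗ δ.toLinearMap
      map_one_eq_zero' := by simp
      leibniz' := by
        intro p q
        simp only [LinearMap.comp_apply, Derivation.coeFn_coe, Derivation.leibniz,
          smul_eq_mul, map_add]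
        ring_nf
        rw [h2]
        ring } with hD
  have hDapp : ∀ f, D f = δ (δ f) := fun f => rfl
  have key : D = (X 1 ^ 2 : MvPolynomial (Fin 2) k) • δ := by
    apply derivation_ext
    intro i
    fin_cases i <;>
      simp only [hDapp, Derivation.smul_apply, smul_eq_mul, h0, h1, map_add, map_mul, map_pow]
    · show δ (δ (X 0)) = X 1 ^ 2 * δ (X 0)
      rw [h0]
      simp only [Derivation.leibniz, Derivation.leibniz_pow, h0, h1, map_add,
        smul_eq_mul, nsmul_eq_mul, Nat.cast_ofNat]
      ring_nf
      linear_combination (X 0 * X 1 ^ 4 + C a * X 0 ^ 3 * X 1) * h2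
    · show δ (δ (X 1)) = X 1 ^ 2 * δ (X 1)
      rw [h1]
      have hC : δ (C a) = 0 := by
        rw [show (C a : MvPolynomial (Fin 2) k) = algebraMap k _ a from rfl,
          Derivation.map_algebraMap]
      simp only [Derivation.leibniz, Derivation.leibniz_pow, h0, h1, map_add, hC,
        smul_eq_mul, nsmul_eq_mul, Nat.cast_ofNat]
      ring_nf
      linear_combination (2 * (C a * X 0 ^ 2 * X 1 ^ 2) + X 1 ^ 5) * h2
  have main : ∀ f, δ (δ f) = X 1 ^ 2 * δ f := by
    intro f
    rw [← hDapp, key, Derivation.smul_apply, smul_eq_mul]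
  exact ⟨main, ⟨X 1 ^ 2, main⟩⟩
end

section
/- Let a ∈ k be nonzero and let δ be the k-derivation xy²·∂/∂x + (ax² + y³)·∂/∂y of k[x,y]. Then the kernel of δ equals the k-subalgebra of k[x,y] generated by x², y² and ax³ + xy³. -/
open MvPolynomial

section Aux

variable {k : Type*} [Field k]

/-- even-supported polynomials -/
def Ev (f : MvPolynomial (Fin 2) k) : Prop :=
  ∀ m ∈ f.support, Even (m 0) ∧ Even (m 1)

lemma ev_C (c : k) : Ev (C c : MvPolynomial (Fin 2) k) := by
  classical
  intro m hm
  rw [C_apply, support_monomial] at hm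
  split at hm
  · simp at hm
  · rw [Finset.mem_singleton.1 hm]; simp

lemma ev_add {f g : MvPolynomial (Fin 2) k} (hf : Ev f) (hg : Ev g) : Ev (f + g) := by
  intro m hm
  rcases Finset.mem_union.1 (support_add hm) with h | h
  exacts [hf m h, hg m h]

lemma ev_mul {f g : MvPolynomial (Fin 2) k} (hf : Ev f) (hg : Ev g) : Ev (f * g) := by
  intro m hm
  obtain ⟨p, hp, q, hq, rfl⟩ := Finset.mem_add.1 (support_mul f g hm)
  obtain ⟨hp0, hp1⟩ := hf p hp
  obtain ⟨hq0, hq1⟩ := hg q hq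
  exact ⟨hp0.add hq0, hp1.add hq1⟩

lemma even_single_apply (i j : Fin 2) : Even ((Finsupp.single i 2) j) := by
  classical
  rw [Finsupp.single_apply]
  split <;> simp

lemma ev_X_sq (i : Fin 2) : Ev ((X i : MvPolynomial (Fin 2) k) ^ 2) := by
  classical
  intro m hm
  rw [X_pow_eq_monomial, support_monomial, if_neg (one_ne_zero' k)] at hm
  rw [Finset.mem_singleton.1 hm]
  exact ⟨even_single_apply i 0, even_single_apply i 1⟩

lemma monomial_eq_prod (m : Fin 2 →₀ ℕ) (c : k) :
    (monomial m c : MvPolynomial (Fin 2) k) = C c * (X 0 ^ (m 0) * X 1 ^ (m 1)) := by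
  rw [monomial_eq, Finsupp.prod_fintype _ _ (fun i => pow_zero _), Fin.prod_univ_two]

lemma mem_adjoin_of_ev {f : MvPolynomial (Fin 2) k} (hf : Ev f) :
    f ∈ Algebra.adjoin k ({X 0 ^ 2, X 1 ^ 2} : Set (MvPolynomial (Fin 2) k)) := by
  rw [f.as_sum]
  refine Subalgebra.sum_mem _ fun m hm => ?_
  obtain ⟨⟨s, hs⟩, ⟨t, ht⟩⟩ := hf m hm
  have h0 : (X 0 : MvPolynomial (Fin 2) k) ^ (m 0) = (X 0 ^ 2) ^ s := by
    rw [← pow_mul, two_mul, hs]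
  have h1 : (X 1 : MvPolynomial (Fin 2) k) ^ (m 1) = (X 1 ^ 2) ^ t := by
    rw [← pow_mul, two_mul, ht]
  rw [monomial_eq_prod, h0, h1, ← algebraMap_eq]
  exact mul_mem (Subalgebra.algebraMap_mem _ _)
    (mul_mem (pow_mem (Algebra.subset_adjoin (by simp)) s)
      (pow_mem (Algebra.subset_adjoin (by simp)) t))

lemma decomp (f : MvPolynomial (Fin 2) k) :
    ∃ r0 r1 r2 r3 : MvPolynomial (Fin 2) k, Ev r0 ∧ Ev r1 ∧ Ev r2 ∧ Ev r3 ∧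
      f = r0 + r1 * X 0 + r2 * X 1 + r3 * (X 0 * X 1) := by
  induction f using MvPolynomial.induction_on with
  | C c => exact ⟨C c, 0, 0, 0, ev_C c, by simp [Ev], by simp [Ev], by simp [Ev], by ring⟩
  | add p q hp hq =>
      obtain ⟨p0, p1, p2, p3, e0, e1, e2, e3, rfl⟩ := hp
      obtain ⟨q0, q1, q2, q3, f0, f1, f2, f3, rfl⟩ := hq
      exact ⟨p0 + q0, p1 + q1, p2 + q2, p3 + q3, ev_add e0 f0, ev_add e1 f1,
        ev_add e2 f2, ev_add e3 f3, by ring⟩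
  | mul_X p n hp =>
      obtain ⟨p0, p1, p2, p3, e0, e1, e2, e3, rfl⟩ := hp
      fin_cases n
      · exact ⟨p1 * X 0 ^ 2, p0, p3 * X 0 ^ 2, p2, ev_mul e1 (ev_X_sq 0), e0,
          ev_mul e3 (ev_X_sq 0), e2, by simp only [Fin.mk_zero, Fin.mk_one]; ring⟩
      · exact ⟨p2 * X 1 ^ 2, p3 * X 1 ^ 2, p0, p1, ev_mul e2 (ev_X_sq 1),
          ev_mul e3 (ev_X_sq 1), e0, e1, by simp only [Fin.mk_zero, Fin.mk_one]; ring⟩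

/-- class predicate: all monomials have given parities -/
def Cls (i j : ℕ) (f : MvPolynomial (Fin 2) k) : Prop :=
  ∀ m ∈ f.support, m 0 % 2 = i ∧ m 1 % 2 = j

lemma cls_of_ev {f : MvPolynomial (Fin 2) k} (hf : Ev f) : Cls 0 0 f := by
  intro m hm
  obtain ⟨h0, h1⟩ := hf m hm
  rw [Nat.even_iff] at h0 h1
  exact ⟨h0, h1⟩

lemma cls_mul_X {f : MvPolynomial (Fin 2) k} (hf : Ev f) (i : Fin 2) :
    Cls (if i = 0 then 1 else 0) (if i = 0 then 0 else 1) (f * X i) := by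
  intro m hm
  obtain ⟨p, hp, q, hq, rfl⟩ := Finset.mem_add.1 (support_mul f (X i) hm)
  rw [support_X, Finset.mem_singleton] at hq
  subst hq
  obtain ⟨h0, h1⟩ := hf p hp
  rw [Nat.even_iff] at h0 h1
  fin_cases i <;> simp_all [Finsupp.single_apply] <;> omega

lemma three_zero (T0 T1 T2 : MvPolynomial (Fin 2) k)
    (h0 : Cls 0 0 T0) (h1 : Cls 1 0 T1) (h2 : Cls 0 1 T2)
    (h : T0 + T1 + T2 = 0) : T0 = 0 ∧ T1 = 0 ∧ T2 = 0 := by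
  have key : ∀ m : Fin 2 →₀ ℕ, coeff m T0 + coeff m T1 + coeff m T2 = 0 := by
    intro m
    have := congrArg (coeff m) h
    simpa [coeff_add] using this
  have z : ∀ (S : MvPolynomial (Fin 2) k) (a b : ℕ), Cls a b S →
      ∀ m : Fin 2 →₀ ℕ, ¬(m 0 % 2 = a ∧ m 1 % 2 = b) → coeff m S = 0 := by
    intro S a b hS m hm
    by_contra hc
    exact hm (hS m (mem_support_iff.2 hc))
  refine ⟨?_, ?_, ?_⟩ <;> ext m <;> rw [coeff_zero] <;> by_contra hne
  · obtain ⟨e0, e1⟩ := h0 m (mem_support_iff.2 hne)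
    have := key m
    rw [z T1 1 0 h1 m (by omega), z T2 0 1 h2 m (by omega)] at this
    simp at this; exact hne this
  · obtain ⟨e0, e1⟩ := h1 m (mem_support_iff.2 hne)
    have := key m
    rw [z T0 0 0 h0 m (by omega), z T2 0 1 h2 m (by omega)] at this
    simp at this; exact hne this
  · obtain ⟨e0, e1⟩ := h2 m (mem_support_iff.2 hne)
    have := key m
    rw [z T0 0 0 h0 m (by omega), z T1 1 0 h1 m (by omega)] at this
    simp at this; exact hne this

lemma prime_X0 : Prime (X 0 : MvPolynomial (Fin 2) k) := by
  rw [← MulEquiv.prime_iff (MvPolynomial.finSuccEquiv k 1).toRingEquiv.toMulEquiv]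
  show Prime ((MvPolynomial.finSuccEquiv k 1) (X 0))
  rw [finSuccEquiv_X_zero]
  exact Polynomial.prime_X

lemma not_X0_dvd_X1 : ¬ (X 0 : MvPolynomial (Fin 2) k) ∣ X 1 := by
  rintro ⟨c, hc⟩
  have := congrArg (aeval ![0, (1:k)]) hc
  simp at this

lemma two_eq_zero' [CharP k 2] : (2 : MvPolynomial (Fin 2) k) = 0 := by
  haveI := charP_of_injective_algebraMap' (A := MvPolynomial (Fin 2) k) k 2
  simpa using CharP.cast_eq_zero (MvPolynomial (Fin 2) k) 2

lemma delta_ker [CharP k 2] (a : k)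
    (δ : Derivation k (MvPolynomial (Fin 2) k) (MvPolynomial (Fin 2) k))
    (hX0 : δ (X 0) = X 0 * X 1 ^ 2) (hX1 : δ (X 1) = C a * X 0 ^ 2 + X 1 ^ 3)
    {f : MvPolynomial (Fin 2) k}
    (hf : f ∈ Algebra.adjoin k ({X 0 ^ 2, X 1 ^ 2, C a * X 0 ^ 3 + X 0 * X 1 ^ 3} :
      Set (MvPolynomial (Fin 2) k))) : δ f = 0 := by
  have h2 : (2 : MvPolynomial (Fin 2) k) = 0 := two_eq_zero'
  induction hf using Algebra.adjoin_induction with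
  | mem x hx =>
      rcases hx with rfl | rfl | rfl
      · rw [pow_two, Derivation.leibniz, smul_eq_mul]
        linear_combination (X 0 * δ (X 0)) * h2
      · rw [pow_two, Derivation.leibniz, smul_eq_mul]
        linear_combination (X 1 * δ (X 1)) * h2
      · simp only [map_add, Derivation.leibniz, Derivation.leibniz_pow, derivation_C,
          smul_eq_mul, smul_zero, mul_zero, add_zero, zero_add, nsmul_eq_mul, hX0, hX1]
        push_cast
        linear_combination (3 * C a * X 0 ^ 3 * X 1 ^ 2 + 2 * X 0 * X 1 ^ 5) * h2
  | algebraMap r => exact δ.map_algebraMap r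
  | add x y _ _ hx hy => rw [map_add, hx, hy, add_zero]
  | mul x y _ _ hx hy => rw [Derivation.leibniz, hx, hy, smul_zero, smul_zero, add_zero]

end Aux

/-- For a ≠ 0 and δ = xy²·∂/∂x + (ax² + y³)·∂/∂y, the kernel of δ equals
the k-subalgebra generated by x², y², ax³ + xy³. -/
theorem stmt_8 (k : Type*) [Field k] [IsAlgClosed k] [CharP k 2] (a : k) (ha : a ≠ 0)
    (δ : Derivation k (MvPolynomial (Fin 2) k) (MvPolynomial (Fin 2) k))
    (hδ : δ = mkDerivation k
      ![(X 0 : MvPolynomial (Fin 2) k) * X 1 ^ 2, C a * X 0 ^ 2 + X 1 ^ 3]) :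
    {f : MvPolynomial (Fin 2) k | δ f = 0} =
      ↑(Algebra.adjoin k ({X 0 ^ 2, X 1 ^ 2, C a * X 0 ^ 3 + X 0 * X 1 ^ 3} :
          Set (MvPolynomial (Fin 2) k))) := by
  have hX0 : δ (X 0) = X 0 * X 1 ^ 2 := by rw [hδ, mkDerivation_X]; simp
  have hX1 : δ (X 1) = C a * X 0 ^ 2 + X 1 ^ 3 := by
    rw [hδ, mkDerivation_X]; simp
  have h2 : (2 : MvPolynomial (Fin 2) k) = 0 := two_eq_zero'
  have hsub : ({X 0 ^ 2, X 1 ^ 2} : Set (MvPolynomial (Fin 2) k)) ⊆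
      ({X 0 ^ 2, X 1 ^ 2, C a * X 0 ^ 3 + X 0 * X 1 ^ 3} : Set (MvPolynomial (Fin 2) k)) := by
    rintro x (rfl | rfl) <;> simp
  ext f
  simp only [Set.mem_setOf_eq, SetLike.mem_coe]
  constructor
  · intro h0f
    obtain ⟨r0, r1, r2, r3, e0, e1, e2, e3, hf⟩ := decomp f
    -- δ kills even-supported polynomials
    have evker : ∀ g : MvPolynomial (Fin 2) k, Ev g → δ g = 0 := fun g hg =>
      delta_ker a δ hX0 hX1 (Algebra.adjoin_mono hsub (mem_adjoin_of_ev hg))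
    have hr0 := evker r0 e0
    have hr1 := evker r1 e1
    have hr2 := evker r2 e2
    have hr3 := evker r3 e3
    rw [hf] at h0f
    simp only [map_add, Derivation.leibniz, smul_eq_mul, hX0, hX1, hr0, hr1, hr2, hr3,
      mul_zero, add_zero, zero_add] at h0f
    have hsum : (C a * X 0 ^ 2 * r2) + (X 1 ^ 2 * r1 + C a * X 0 ^ 2 * r3) * X 0
        + (X 1 ^ 2 * r2) * X 1 = 0 := by
      linear_combination h0f - (X 0 * X 1 ^ 3 * r3) * h2
    obtain ⟨hT0, hT1, hT2⟩ := three_zero _ _ _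
      (cls_of_ev (ev_mul (ev_mul (ev_C a) (ev_X_sq 0)) e2))
      (by simpa using cls_mul_X (ev_add (ev_mul (ev_X_sq 1) e1)
        (ev_mul (ev_mul (ev_C a) (ev_X_sq 0)) e3)) 0)
      (by simpa using cls_mul_X (ev_mul (ev_X_sq 1) e2) 1)
      hsum
    have hxne : (X 0 : MvPolynomial (Fin 2) k) ≠ 0 := X_ne_zero 0
    have hr2z : r2 = 0 := by
      rcases mul_eq_zero.1 hT0 with h | h
      · rcases mul_eq_zero.1 h with h' | h'
        · exact absurd h' (by rw [← algebraMap_eq]; simpa using ha)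
        · exact absurd h' (pow_ne_zero _ hxne)
      · exact h
    have hE : X 1 ^ 2 * r1 = C a * X 0 ^ 2 * r3 := by
      rcases mul_eq_zero.1 hT1 with h | h
      · linear_combination h - C a * X 0 ^ 2 * r3 * h2
      · exact absurd h hxne
    -- divisibility by X 0 twice
    have p : Prime (X 0 : MvPolynomial (Fin 2) k) := prime_X0
    have hnd : ¬ (X 0 : MvPolynomial (Fin 2) k) ∣ X 1 ^ 2 :=
      fun h => not_X0_dvd_X1 (p.dvd_of_dvd_pow h)
    obtain ⟨c, hc⟩ : (X 0 : MvPolynomial (Fin 2) k) ∣ r1 :=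
      (p.dvd_or_dvd ⟨X 0 * (C a * r3), by linear_combination hE⟩).resolve_left hnd
    have hE2 : X 1 ^ 2 * c = C a * X 0 * r3 := by
      apply mul_left_cancel₀ hxne
      rw [hc] at hE
      linear_combination hE
    obtain ⟨h, hh⟩ : (X 0 : MvPolynomial (Fin 2) k) ∣ c :=
      (p.dvd_or_dvd ⟨C a * r3, by linear_combination hE2⟩).resolve_left hnd
    have hE3 : X 1 ^ 2 * h = C a * r3 := by
      apply mul_left_cancel₀ hxne
      rw [hh] at hE2
      linear_combination hE2
    have hCa : (C a⁻¹ : MvPolynomial (Fin 2) k) * C a = 1 := by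
      rw [← C_mul, inv_mul_cancel₀ ha, C_1]
    have hr3eq : r3 = C a⁻¹ * (X 1 ^ 2 * h) := by
      linear_combination (-(C a⁻¹)) * hE3 - r3 * hCa
    -- h is even-supported
    have eh : Ev h := by
      intro m hm
      have hco : coeff (Finsupp.single 0 2 + m) r1 = coeff m h := by
        rw [hc, hh, show (X 0 : MvPolynomial (Fin 2) k) * (X 0 * h)
            = monomial (Finsupp.single 0 2) 1 * h by rw [← X_pow_eq_monomial]; ring,
          coeff_monomial_mul, one_mul]
      have hmem : (Finsupp.single 0 2 + m) ∈ r1.support :=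
        mem_support_iff.2 (by rw [hco]; exact mem_support_iff.1 hm)
      obtain ⟨q0, q1⟩ := e1 _ hmem
      simp only [Finsupp.add_apply, Finsupp.single_apply] at q0 q1
      norm_num at q0 q1
      rw [Nat.even_iff] at q0 q1
      rw [Nat.even_iff, Nat.even_iff]
      omega
    -- assemble
    have hfeq : f = r0 + C a⁻¹ * h * (C a * X 0 ^ 3 + X 0 * X 1 ^ 3) := by
      rw [hf, hr2z, hc, hh, hr3eq]
      linear_combination (-(h * X 0 ^ 3)) * hCa
    rw [hfeq]
    refine add_mem (Algebra.adjoin_mono hsub (mem_adjoin_of_ev e0))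
      (mul_mem (mul_mem ?_ (Algebra.adjoin_mono hsub (mem_adjoin_of_ev eh)))
        (Algebra.subset_adjoin (by simp)))
    rw [← algebraMap_eq]
    exact Subalgebra.algebraMap_mem _ _
  · intro hfA
    exact delta_ker a δ hX0 hX1 hfA
end

section
/- Let a ∈ k be nonzero and let δ be the k-derivation y⁴·∂/∂x + ax²·∂/∂y of k[x,y]. Then x², y² and ax³ + y⁵ all lie in the kernel of δ, and the k-subalgebra of k[x,y] generated by x², y² and ax³ + y⁵ is isomorphic, as a k-algebra, to k[X,Y,Z]/(Z² + a²X³ + Y⁵). -/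
open MvPolynomial


section Aux
variable (k : Type*) [Field k] [IsAlgClosed k] [CharP k 2]

lemma aux_two : (2 : MvPolynomial (Fin 2) k) = 0 := by
  exact_mod_cast CharP.cast_eq_zero (MvPolynomial (Fin 2) k) 2

lemma aux_pderiv_expand (f : MvPolynomial (Fin 2) k) :
    pderiv 0 (expand 2 f : MvPolynomial (Fin 2) k) = 0 := by
  induction f using MvPolynomial.induction_on with
  | C r => simp
  | add p q hp hq => simp [map_add, hp, hq]
  | mul_X p i hp =>
    rw [map_mul, expand_X, pderiv_mul, hp, Derivation.leibniz_pow]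
    simp
    exact Or.inr (Or.inl (aux_two k))

lemma aux_expand_inj : Function.Injective (expand 2 : MvPolynomial (Fin 2) k →ₐ[k] MvPolynomial (Fin 2) k) := by
  have hfact : Fact (Nat.Prime 2) := ⟨Nat.prime_two⟩
  set ψ : k →+* k := ((frobeniusEquiv k 2).symm : k ≃+* k).toRingHom with hψ
  have hψ2 : ∀ r : k, (ψ r) ^ 2 = r := fun r => (frobeniusEquiv k 2).apply_symm_apply r
  have key : ∀ f : MvPolynomial (Fin 2) k, expand 2 f = (map ψ f) ^ 2 := by
    intro f
    induction f using MvPolynomial.induction_on with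
    | C r => simp [← C_pow, hψ2]
    | add p q hp hq => rw [map_add, map_add, hp, hq, CharTwo.add_sq]
    | mul_X p i hp => rw [map_mul, map_mul, hp, expand_X, mul_pow, map_X]
  intro f g hfg
  rw [key, key] at hfg
  have hfr : Function.Injective (frobenius (MvPolynomial (Fin 2) k) 2) := frobenius_inj _ 2
  exact MvPolynomial.map_injective ψ ((frobeniusEquiv k 2).symm.injective) (hfr hfg)

lemma aux_key (a : k) (ha : a ≠ 0) (p q : MvPolynomial (Fin 2) k)
    (h : expand 2 q + expand 2 p * (C a * X 0 ^ 3 + X 1 ^ 5) = 0) : p = 0 ∧ q = 0 := by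
  have h3 : (3 : k) = 1 := by
    have := CharP.cast_eq_zero k 2
    linear_combination this
  have hd := congrArg (pderiv 0) h
  rw [map_add, aux_pderiv_expand, pderiv_mul, aux_pderiv_expand] at hd
  simp only [map_add, pderiv_mul, pderiv_C_mul] at hd
  rw [Derivation.leibniz_pow, Derivation.leibniz_pow] at hd
  simp [h3] at hd
  have hp0 : p = 0 := by
    apply aux_expand_inj k
    rcases hd with h' | h' | h'
    · simpa using h'
    · exact absurd h' ha
    · exfalso
      rw [← map_ofNat (C : k →+* MvPolynomial (Fin 2) k) 3, h3, map_one] at h'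
      exact one_ne_zero h'
  refine ⟨hp0, ?_⟩
  apply aux_expand_inj k
  rw [hp0] at h
  simpa using h
end Aux

section Ker
variable (k : Type*) [Field k] [IsAlgClosed k] [CharP k 2] (a : k)

noncomputable def myPhi : MvPolynomial (Fin 3) k →ₐ[k] MvPolynomial (Fin 2) k :=
  aeval ![(X 0 : MvPolynomial (Fin 2) k) ^ 2, X 1 ^ 2, C a * X 0 ^ 3 + X 1 ^ 5]

noncomputable def myPsi : Polynomial (MvPolynomial (Fin 2) k) →+* MvPolynomial (Fin 2) k :=
  Polynomial.eval₂RingHom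
    (((expand 2 : MvPolynomial (Fin 2) k →ₐ[k] MvPolynomial (Fin 2) k).comp
      (rename (Equiv.swap (0 : Fin 2) 1))).toRingHom)
    (C a * X 0 ^ 3 + X 1 ^ 5)

lemma aux_comm (f : MvPolynomial (Fin 3) k) :
    myPsi k a (finSuccEquiv k 2 (rename (Equiv.swap (0 : Fin 3) 2) f)) = myPhi k a f := by
  induction f using MvPolynomial.induction_on with
  | C r => simp [myPsi, myPhi, finSuccEquiv_apply]
  | add p q hp hq => simp only [map_add, hp, hq]
  | mul_X p i hp =>
    simp only [map_mul, hp]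
    congr 1
    have h0 : (Equiv.swap (0 : Fin 3) 2) 0 = 2 := by decide
    have h1 : (Equiv.swap (0 : Fin 3) 2) 1 = 1 := by decide
    have h2 : (Equiv.swap (0 : Fin 3) 2) 2 = 0 := by decide
    have hs0 : (Equiv.swap (0 : Fin 2) 1) 0 = 1 := by decide
    have hs1 : (Equiv.swap (0 : Fin 2) 1) 1 = 0 := by decide
    fin_cases i
    · show myPsi k a (finSuccEquiv k 2 (rename (Equiv.swap (0:Fin 3) 2) (X 0))) = myPhi k a (X 0)
      rw [rename_X, h0, show (X (2:Fin 3) : MvPolynomial (Fin 3) k) = X (Fin.succ 1) from rfl,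
        finSuccEquiv_X_succ]
      simp [myPsi, myPhi, hs1]
    · show myPsi k a (finSuccEquiv k 2 (rename (Equiv.swap (0:Fin 3) 2) (X 1))) = myPhi k a (X 1)
      rw [rename_X, h1, show (X (1:Fin 3) : MvPolynomial (Fin 3) k) = X (Fin.succ 0) from rfl,
        finSuccEquiv_X_succ]
      simp [myPsi, myPhi, hs0]
    · show myPsi k a (finSuccEquiv k 2 (rename (Equiv.swap (0:Fin 3) 2) (X 2))) = myPhi k a (X 2)
      rw [rename_X, h2, finSuccEquiv_X_zero]
      simp [myPsi, myPhi]

lemma aux_phi_rel :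
    myPhi k a ((X 2 : MvPolynomial (Fin 3) k) ^ 2 + C (a ^ 2) * X 0 ^ 3 + X 1 ^ 5) = 0 := by
  simp [myPhi]
  ring_nf
  rw [aux_two k]
  ring

lemma aux_rel2 :
    finSuccEquiv k 2 (rename (Equiv.swap (0 : Fin 3) 2)
        ((X 2 : MvPolynomial (Fin 3) k) ^ 2 + C (a ^ 2) * X 0 ^ 3 + X 1 ^ 5)) =
      Polynomial.X ^ 2 + Polynomial.C (C (a ^ 2) * X 1 ^ 3 + X 0 ^ 5) := by
  have h0 : (Equiv.swap (0 : Fin 3) 2) 0 = 2 := by decide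
  have h1 : (Equiv.swap (0 : Fin 3) 2) 1 = 1 := by decide
  have h2 : (Equiv.swap (0 : Fin 3) 2) 2 = 0 := by decide
  have hC : (finSuccEquiv k 2) (C a : MvPolynomial (Fin 3) k) = Polynomial.C (C a) := by
    simp [finSuccEquiv_apply]
  simp only [map_add, map_mul, map_pow, rename_X, rename_C, h0, h1, h2]
  rw [finSuccEquiv_X_zero,
    show (X (2:Fin 3) : MvPolynomial (Fin 3) k) = X (Fin.succ 1) from rfl,
    show (X (1:Fin 3) : MvPolynomial (Fin 3) k) = X (Fin.succ 0) from rfl,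
    finSuccEquiv_X_succ, finSuccEquiv_X_succ, hC]
  ring

lemma aux_ker (ha : a ≠ 0) :
    RingHom.ker (myPhi k a) =
      Ideal.span {(X 2 : MvPolynomial (Fin 3) k) ^ 2 + C (a ^ 2) * X 0 ^ 3 + X 1 ^ 5} := by
  set rel : MvPolynomial (Fin 3) k := X 2 ^ 2 + C (a ^ 2) * X 0 ^ 3 + X 1 ^ 5 with hreldef
  apply le_antisymm
  swap
  · rw [Ideal.span_le, Set.singleton_subset_iff]
    exact aux_phi_rel k a
  intro f hf
  rw [RingHom.mem_ker] at hf
  set σ : Equiv.Perm (Fin 3) := Equiv.swap 0 2 with hσ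
  set F := finSuccEquiv k 2 with hF
  set rel2 : Polynomial (MvPolynomial (Fin 2) k) :=
    Polynomial.X ^ 2 + Polynomial.C (C (a ^ 2) * X 1 ^ 3 + X 0 ^ 5) with hrel2def
  have hdeg2 : rel2.degree = 2 := by
    rw [hrel2def]
    exact Polynomial.degree_X_pow_add_C (by norm_num) _
  have hmonic : rel2.Monic := by
    rw [hrel2def]
    exact Polynomial.monic_X_pow_add (lt_of_le_of_lt Polynomial.degree_C_le (by norm_num))
  set f2 := F (rename σ f) with hf2
  have hdiv := Polynomial.modByMonic_add_div f2 rel2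
  set r := f2 %ₘ rel2 with hrdef
  set g := f2 /ₘ rel2 with hgdef
  have hdeg : r.degree < 2 := by
    have := Polynomial.degree_modByMonic_lt f2 hmonic
    rwa [hdeg2] at this
  have hdeg1 : r.degree ≤ 1 := by
    by_cases hr0 : r = 0
    · rw [hr0]; simp
    · rw [Polynomial.degree_eq_natDegree hr0] at hdeg ⊢
      exact_mod_cast Nat.lt_succ_iff.mp (by exact_mod_cast hdeg)
  have hr : r = Polynomial.C (r.coeff 1) * Polynomial.X + Polynomial.C (r.coeff 0) :=
    Polynomial.eq_X_add_C_of_degree_le_one hdeg1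
  -- apply Psi
  have hpsi_rel2 : myPsi k a rel2 = 0 := by
    rw [hrel2def, ← aux_rel2 k a, aux_comm, aux_phi_rel]
  have h0 : myPsi k a r = 0 := by
    have := congrArg (myPsi k a) hdiv
    rw [map_add, map_mul, hpsi_rel2, zero_mul, add_zero, aux_comm, hf] at this
    exact this
  rw [hr] at h0
  simp only [myPsi, Polynomial.coe_eval₂RingHom, Polynomial.eval₂_add, Polynomial.eval₂_mul,
    Polynomial.eval₂_C, Polynomial.eval₂_X] at h0
  have hkey := aux_key k a ha (rename (Equiv.swap (0:Fin 2) 1) (r.coeff 1))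
    (rename (Equiv.swap (0:Fin 2) 1) (r.coeff 0)) ?_
  swap
  · simp only [AlgHom.toRingHom_eq_coe, RingHom.coe_coe, AlgHom.coe_comp,
      Function.comp_apply] at h0
    linear_combination h0
  have hinj2 : Function.Injective (rename (R := k) (⇑(Equiv.swap (0:Fin 2) 1))) :=
    rename_injective _ (Equiv.injective _)
  have hc1 : r.coeff 1 = 0 := hinj2 (by simpa using hkey.1)
  have hc0 : r.coeff 0 = 0 := hinj2 (by simpa using hkey.2)
  have hr0 : r = 0 := by rw [hr, hc0, hc1]; simp
  rw [hr0, zero_add] at hdiv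
  -- f = rel * (rename σ (F.symm g))
  have hfeq : f = rel * rename σ (F.symm g) := by
    apply rename_injective (⇑σ) (Equiv.injective σ)
    rw [map_mul]
    have : rename (⇑σ) (rename (⇑σ) (F.symm g)) = F.symm g := by
      rw [rename_rename]
      have : (⇑σ ∘ ⇑σ) = id := by
        funext i; simp [hσ]
      rw [this, rename_id, AlgHom.id_apply]
    rw [this]
    have hrelσ : rename (⇑σ) rel = F.symm rel2 := by
      rw [hσ, hreldef, hF, hrel2def, eq_comm, AlgEquiv.symm_apply_eq]
      exact (aux_rel2 k a).symm
    rw [hrelσ]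
    apply F.injective
    rw [map_mul, AlgEquiv.apply_symm_apply, AlgEquiv.apply_symm_apply, ← hf2, ← hdiv]
  rw [hfeq]
  exact Ideal.mem_span_singleton.mpr (Dvd.intro _ rfl)

lemma aux_range :
    (myPhi k a).range = Algebra.adjoin k
      ({X 0 ^ 2, X 1 ^ 2, C a * X 0 ^ 3 + X 1 ^ 5} : Set (MvPolynomial (Fin 2) k)) := by
  rw [myPhi, ← Algebra.adjoin_range_eq_range_aeval]
  congr 1
  ext x
  constructor
  · rintro ⟨i, rfl⟩
    fin_cases i <;> simp
  · rintro (rfl | rfl | rfl)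
    exacts [⟨0, rfl⟩, ⟨1, rfl⟩, ⟨2, rfl⟩]

theorem stmt_10' (a : k) (ha : a ≠ 0)
    (δ : Derivation k (MvPolynomial (Fin 2) k) (MvPolynomial (Fin 2) k))
    (hδ : δ = mkDerivation k
      ![(X 1 : MvPolynomial (Fin 2) k) ^ 4, C a * X 0 ^ 2]) :
    δ ((X 0 : MvPolynomial (Fin 2) k) ^ 2) = 0 ∧
    δ ((X 1 : MvPolynomial (Fin 2) k) ^ 2) = 0 ∧
    δ (C a * (X 0 : MvPolynomial (Fin 2) k) ^ 3 + X 1 ^ 5) = 0 ∧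
    Nonempty
      ((Algebra.adjoin k ({X 0 ^ 2, X 1 ^ 2, C a * X 0 ^ 3 + X 1 ^ 5} :
          Set (MvPolynomial (Fin 2) k))) ≃ₐ[k]
        (MvPolynomial (Fin 3) k ⧸
          Ideal.span {(X 2 : MvPolynomial (Fin 3) k) ^ 2 + C (a ^ 2) * X 0 ^ 3 + X 1 ^ 5})) := by
  subst hδ
  refine ⟨?_, ?_, ?_, ?_⟩
  · rw [Derivation.leibniz_pow]; simp [aux_two k]
  · rw [Derivation.leibniz_pow]; simp [aux_two k]
  · rw [map_add, Derivation.leibniz, Derivation.leibniz_pow, Derivation.leibniz_pow]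
    simp [mkDerivation_X]
    ring_nf
    have h8 : (8 : MvPolynomial (Fin 2) k) = 0 := by
      have h2 := aux_two k
      linear_combination (4 : MvPolynomial (Fin 2) k) * h2
    rw [h8, mul_zero]
  · exact ⟨(((Ideal.quotientEquivAlgOfEq k (aux_ker k a ha).symm).trans
      (Ideal.quotientKerEquivRange (myPhi k a))).trans
      (Subalgebra.equivOfEq _ _ (aux_range k a))).symm⟩
end Ker


/-- For a ≠ 0 and δ = y⁴·∂/∂x + ax²·∂/∂y, the elements x², y², ax³ + y⁵ lie in
the kernel of δ, and k[x², y², ax³ + y⁵] ≅ k[X,Y,Z]/(Z² + a²X³ + Y⁵). -/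
theorem stmt_10 (k : Type*) [Field k] [IsAlgClosed k] [CharP k 2] (a : k) (ha : a ≠ 0)
    (δ : Derivation k (MvPolynomial (Fin 2) k) (MvPolynomial (Fin 2) k))
    (hδ : δ = mkDerivation k
      ![(X 1 : MvPolynomial (Fin 2) k) ^ 4, C a * X 0 ^ 2]) :
    δ ((X 0 : MvPolynomial (Fin 2) k) ^ 2) = 0 ∧
    δ ((X 1 : MvPolynomial (Fin 2) k) ^ 2) = 0 ∧
    δ (C a * (X 0 : MvPolynomial (Fin 2) k) ^ 3 + X 1 ^ 5) = 0 ∧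
    Nonempty
      ((Algebra.adjoin k ({X 0 ^ 2, X 1 ^ 2, C a * X 0 ^ 3 + X 1 ^ 5} :
          Set (MvPolynomial (Fin 2) k))) ≃ₐ[k]
        (MvPolynomial (Fin 3) k ⧸
          Ideal.span {(X 2 : MvPolynomial (Fin 3) k) ^ 2 + C (a ^ 2) * X 0 ^ 3 + X 1 ^ 5})) :=
  stmt_10' k a ha δ hδ
end

section
/- Let F = a₃₀x³ + a₂₁x²y + a₁₂xy² + a₂₀x² + a₁₁xy + a₀₂y² + a₁₀x + a₀₁y and G = a₃₀x²y + a₂₁xy² + a₁₂y³ + b₂₀x² + b₁₁xy + b₀₂y² + b₁₀x + b₀₁y in k[x,y], with coefficients in k. Assume F ≠ 0, G ≠ 0, that F and G have no common (non-unit) factor, and that there exists H ∈ k[x,y] with F·F_x + G·F_y = H·F and F·G_x + G·G_y = H·G, where subscripts denote partial derivatives. Then a₂₁ = a₁₁ = a₀₁ = b₁₁ = b₁₀ = 0 and a₁₀ = b₀₁. -/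
open MvPolynomial

private lemma aux_constant_dvd {R : Type*} [CommRing R] [IsDomain R] {p : Polynomial R} {f : R}
    (h : p ∣ Polynomial.C f) (hc : p.coeff 1 = f) : f = 0 := by
  by_contra hf
  have h1 : p.natDegree ≤ 0 := by
    have := Polynomial.natDegree_le_of_dvd h (by simpa using hf)
    simpa using this
  have h2 : p.coeff 1 = 0 :=
    Polynomial.coeff_eq_zero_of_natDegree_lt (lt_of_le_of_lt h1 one_pos)
  exact hf (by rw [← hc, h2])

/-- If F = a₃₀x³ + a₂₁x²y + a₁₂xy² + a₂₀x² + a₁₁xy + a₀₂y² + a₁₀x + a₀₁y and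
G = a₃₀x²y + a₂₁xy² + a₁₂y³ + b₂₀x² + b₁₁xy + b₀₂y² + b₁₀x + b₀₁y are nonzero, have no common
non-unit factor, and F·F_x + G·F_y = H·F, F·G_x + G·G_y = H·G for some H, then
a₂₁ = a₁₁ = a₀₁ = b₁₁ = b₁₀ = 0 and a₁₀ = b₀₁. -/
theorem stmt_12 (k : Type*) [Field k] [IsAlgClosed k] [CharP k 2]
    (a30 a21 a12 a20 a11 a02 a10 a01 b20 b11 b02 b10 b01 : k)
    (F G : MvPolynomial (Fin 2) k)
    (hF : F = C a30 * X 0 ^ 3 + C a21 * (X 0 ^ 2 * X 1) + C a12 * (X 0 * X 1 ^ 2) +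
        C a20 * X 0 ^ 2 + C a11 * (X 0 * X 1) + C a02 * X 1 ^ 2 + C a10 * X 0 + C a01 * X 1)
    (hG : G = C a30 * (X 0 ^ 2 * X 1) + C a21 * (X 0 * X 1 ^ 2) + C a12 * X 1 ^ 3 +
        C b20 * X 0 ^ 2 + C b11 * (X 0 * X 1) + C b02 * X 1 ^ 2 + C b10 * X 0 + C b01 * X 1)
    (hF0 : F ≠ 0) (hG0 : G ≠ 0)
    (hcoprime : ∀ d : MvPolynomial (Fin 2) k, d ∣ F → d ∣ G → IsUnit d)
    (H : MvPolynomial (Fin 2) k)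
    (h1 : F * pderiv 0 F + G * pderiv 1 F = H * F)
    (h2 : F * pderiv 0 G + G * pderiv 1 G = H * G) :
    a21 = 0 ∧ a11 = 0 ∧ a01 = 0 ∧ b11 = 0 ∧ b10 = 0 ∧ a10 = b01 := by
  have h2k : (2 : MvPolynomial (Fin 2) k) = 0 := by
    rw [← map_ofNat (C : k →+* MvPolynomial (Fin 2) k) 2,
      show ((2:k) = 0) from by exact_mod_cast CharP.cast_eq_zero k 2, map_zero]
  have h3k : (3 : MvPolynomial (Fin 2) k) = 1 := by
    rw [show (3 : MvPolynomial (Fin 2) k) = 2 + 1 by norm_num, h2k, zero_add]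
  have halg : ∀ c : k, algebraMap k (Polynomial (Polynomial k)) c
      = Polynomial.C (Polynomial.C c) := by
    intro c
    rw [IsScalarTower.algebraMap_apply k (Polynomial k) (Polynomial (Polynomial k))]
    simp [Polynomial.algebraMap_eq]
  -- partial derivatives
  have hFy : pderiv 1 F = C a21 * X 0 ^ 2 + C a11 * X 0 + C a01 := by
    rw [hF]
    simp only [map_add, pderiv_mul, pderiv_C, pderiv_X_self,
      pderiv_X_of_ne (by decide : (0:Fin 2) ≠ 1), pderiv_pow]
    ring_nf
    rw [h2k]; ring
  have hGx : pderiv 0 G = C a21 * X 1 ^ 2 + C b11 * X 1 + C b10 := by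
    rw [hG]
    simp only [map_add, pderiv_mul, pderiv_C, pderiv_X_self,
      pderiv_X_of_ne (by decide : (1:Fin 2) ≠ 0), pderiv_pow]
    ring_nf
    rw [h2k]; ring
  have hrel : IsRelPrime F G := hcoprime
  -- F ∣ F_y
  have hdvd1 : F ∣ pderiv 1 F := by
    refine hrel.dvd_of_dvd_mul_left ⟨H - pderiv 0 F, ?_⟩
    linear_combination h1
  -- G ∣ G_x
  have hdvd2 : G ∣ pderiv 0 G := by
    refine hrel.symm.dvd_of_dvd_mul_left ⟨H - pderiv 1 G, ?_⟩
    linear_combination h2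
  -- map to k[x][y] : X0 ↦ C X, X1 ↦ X
  set φ : MvPolynomial (Fin 2) k →ₐ[k] Polynomial (Polynomial k) :=
    aeval ![Polynomial.C Polynomial.X, Polynomial.X] with hφ
  set f : Polynomial k := Polynomial.C a21 * Polynomial.X^2 + Polynomial.C a11 * Polynomial.X
      + Polynomial.C a01 with hf
  have hφF : φ F =
      Polynomial.C (Polynomial.C a30 * Polynomial.X^3 + Polynomial.C a20 * Polynomial.X^2
        + Polynomial.C a10 * Polynomial.X)
      + Polynomial.C f * Polynomial.X
      + Polynomial.C (Polynomial.C a12 * Polynomial.X + Polynomial.C a02) * Polynomial.X^2 := by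
    rw [hF, hf, hφ]
    simp only [map_add, map_mul, map_pow, MvPolynomial.aeval_X, MvPolynomial.aeval_C,
      Matrix.cons_val_zero, Matrix.cons_val_one, Matrix.head_cons, halg]
    ring
  have hφFy : φ (pderiv 1 F) = Polynomial.C f := by
    rw [hFy, hf, hφ]
    simp only [map_add, map_mul, map_pow, MvPolynomial.aeval_X, MvPolynomial.aeval_C,
      Matrix.cons_val_zero, Matrix.cons_val_one, Matrix.head_cons, halg]
  have hfzero : f = 0 := by
    apply aux_constant_dvd (p := φ F)
    · rw [← hφFy]; exact map_dvd φ hdvd1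
    · rw [hφF]
      simp only [Polynomial.coeff_add, Polynomial.coeff_C, Polynomial.coeff_C_mul,
        Polynomial.coeff_X, Polynomial.coeff_X_pow]
      norm_num
  have ha21 : a21 = 0 := by
    have := congrArg (fun p => Polynomial.coeff p 2) hfzero
    simpa [hf, Polynomial.coeff_C] using this
  have ha11 : a11 = 0 := by
    have := congrArg (fun p => Polynomial.coeff p 1) hfzero
    simpa [hf, Polynomial.coeff_C] using this
  have ha01 : a01 = 0 := by
    have := congrArg (fun p => Polynomial.coeff p 0) hfzero
    simpa [hf, Polynomial.coeff_C] using this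
  -- map to k[y][x] : X0 ↦ X, X1 ↦ C X
  set ψ : MvPolynomial (Fin 2) k →ₐ[k] Polynomial (Polynomial k) :=
    aeval ![Polynomial.X, Polynomial.C Polynomial.X] with hψ
  set g : Polynomial k := Polynomial.C a21 * Polynomial.X^2 + Polynomial.C b11 * Polynomial.X
      + Polynomial.C b10 with hg
  have hψG : ψ G =
      Polynomial.C (Polynomial.C a12 * Polynomial.X^3 + Polynomial.C b02 * Polynomial.X^2
        + Polynomial.C b01 * Polynomial.X)
      + Polynomial.C g * Polynomial.X
      + Polynomial.C (Polynomial.C a30 * Polynomial.X + Polynomial.C b20) * Polynomial.X^2 := by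
    rw [hG, hg, hψ]
    simp only [map_add, map_mul, map_pow, MvPolynomial.aeval_X, MvPolynomial.aeval_C,
      Matrix.cons_val_zero, Matrix.cons_val_one, Matrix.head_cons, halg]
    ring
  have hψGx : ψ (pderiv 0 G) = Polynomial.C g := by
    rw [hGx, hg, hψ]
    simp only [map_add, map_mul, map_pow, MvPolynomial.aeval_X, MvPolynomial.aeval_C,
      Matrix.cons_val_zero, Matrix.cons_val_one, Matrix.head_cons, halg]
  have hgzero : g = 0 := by
    apply aux_constant_dvd (p := ψ G)
    · rw [← hψGx]; exact map_dvd ψ hdvd2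
    · rw [hψG]
      simp only [Polynomial.coeff_add, Polynomial.coeff_C, Polynomial.coeff_C_mul,
        Polynomial.coeff_X, Polynomial.coeff_X_pow]
      norm_num
  have hb11 : b11 = 0 := by
    have := congrArg (fun p => Polynomial.coeff p 1) hgzero
    simpa [hg, Polynomial.coeff_C] using this
  have hb10 : b10 = 0 := by
    have := congrArg (fun p => Polynomial.coeff p 0) hgzero
    simpa [hg, Polynomial.coeff_C] using this
  -- now the last part : F_x = H = G_y
  have hFy0 : pderiv 1 F = 0 := by rw [hFy, ha21, ha11, ha01]; simp
  have hGx0 : pderiv 0 G = 0 := by rw [hGx, ha21, hb11, hb10]; simp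
  have hFx : pderiv 0 F = C a30 * X 0 ^ 2 + C a12 * X 1 ^ 2 + C a10 := by
    rw [hF, ha21, ha11]
    simp only [map_add, pderiv_mul, pderiv_C, pderiv_X_self,
      pderiv_X_of_ne (by decide : (1:Fin 2) ≠ 0), pderiv_pow]
    ring_nf
    rw [h2k, h3k, map_zero]; ring
  have hGy : pderiv 1 G = C a30 * X 0 ^ 2 + C a12 * X 1 ^ 2 + C b01 := by
    rw [hG, ha21, hb11]
    simp only [map_add, pderiv_mul, pderiv_C, pderiv_X_self,
      pderiv_X_of_ne (by decide : (0:Fin 2) ≠ 1), pderiv_pow]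
    ring_nf
    rw [h2k, h3k, map_zero]; ring
  have hH1 : pderiv 0 F = H := by
    apply mul_left_cancel₀ hF0
    rw [hFy0] at h1
    linear_combination h1
  have hH2 : pderiv 1 G = H := by
    apply mul_left_cancel₀ hG0
    rw [hGx0] at h2
    linear_combination h2
  have hab : a10 = b01 := by
    have heq : (C a10 : MvPolynomial (Fin 2) k) = C b01 := by
      have := hH1.trans hH2.symm
      rw [hFx, hGy] at this
      linear_combination this
    exact C_injective _ _ heq
  exact ⟨ha21, ha11, ha01, hb11, hb10, hab⟩
end

section
/- Let b, c ∈ k be nonzero. Then k[[X,Y,Z]]/(Z² + (Y+b)X³ + cXY³) is isomorphic, as a k-algebra, to k[[X,Y,Z]]/(Z² + X³ + XY³). -/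
open MvPowerSeries

namespace Stmt15
variable {k : Type*} [Field k]

/-- total degree of an exponent -/
def deg (m : Fin 3 →₀ ℕ) : ℕ := ∑ i, m i

lemma le_deg (m : Fin 3 →₀ ℕ) (i : Fin 3) : m i ≤ deg m :=
  Finset.single_le_sum (fun _ _ => Nat.zero_le _) (Finset.mem_univ i)

lemma deg_add (p q : Fin 3 →₀ ℕ) : deg (p + q) = deg p + deg q := by
  simp [deg, Finset.sum_add_distrib]

lemma deg_eq_zero {m : Fin 3 →₀ ℕ} (h : deg m = 0) : m = 0 := by
  ext i
  have := le_deg m i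
  simp only [Finsupp.coe_zero, Pi.zero_apply]
  omega

lemma deg_single (i : Fin 3) (e : ℕ) : deg (Finsupp.single i e) = e := by
  simp [deg, Finsupp.single_apply]

lemma deg_sum {ι : Type*} (s : Finset ι) (g : ι → (Fin 3 →₀ ℕ)) :
    deg (∑ i ∈ s, g i) = ∑ i ∈ s, deg (g i) := by
  classical
  induction s using Finset.induction_on with
  | empty => simp [deg]
  | insert _ _ h ih => simp [Finset.sum_insert h, deg_add, ih]

/-- `f` has order at least `d` -/
def OrdGE (f : MvPowerSeries (Fin 3) k) (d : ℕ) : Prop :=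
  ∀ m, deg m < d → coeff m f = 0

lemma ordGE_mono {f : MvPowerSeries (Fin 3) k} {d e : ℕ} (h : OrdGE f d) (he : e ≤ d) :
    OrdGE f e := fun m hm => h m (lt_of_lt_of_le hm he)

lemma ordGE_zero (d : ℕ) : OrdGE (0 : MvPowerSeries (Fin 3) k) d := by
  intro m _; simp

lemma ordGE_add {f g : MvPowerSeries (Fin 3) k} {d : ℕ} (hf : OrdGE f d) (hg : OrdGE g d) :
    OrdGE (f + g) d := by
  intro m hm; simp [hf m hm, hg m hm]

lemma ordGE_mul {f g : MvPowerSeries (Fin 3) k} {d e : ℕ} (hf : OrdGE f d) (hg : OrdGE g e) :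
    OrdGE (f * g) (d + e) := by
  intro m hm
  rw [coeff_mul]
  apply Finset.sum_eq_zero
  rintro ⟨p, q⟩ hpq
  rw [Finset.HasAntidiagonal.mem_antidiagonal] at hpq
  have hd : deg p + deg q = deg m := by rw [← deg_add, hpq]
  rcases lt_or_ge (deg p) d with h | h
  · rw [hf p h, zero_mul]
  · rw [hg q (by omega), mul_zero]

lemma ordGE_monomial (n : Fin 3 →₀ ℕ) (r : k) : OrdGE (monomial n r) (deg n) := by
  intro m hm
  rw [coeff_monomial]
  split
  · subst m; omega
  · rfl

lemma ordGE_C (r : k) : OrdGE (C r) 0 := fun m hm => by omega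

lemma ordGE_C_mul {f : MvPowerSeries (Fin 3) k} {d : ℕ} (r : k) (h : OrdGE f d) :
    OrdGE (C r * f) d := by
  have := ordGE_mul (ordGE_C r) h
  simpa using this

lemma ordGE_X (i : Fin 3) : OrdGE (X i : MvPowerSeries (Fin 3) k) 1 := by
  have := ordGE_monomial (Finsupp.single i 1) (1 : k)
  rw [deg_single] at this
  rwa [X_def]

lemma ordGE_X_pow (i : Fin 3) (e : ℕ) : OrdGE ((X i : MvPowerSeries (Fin 3) k) ^ e) e := by
  have := ordGE_monomial (Finsupp.single i e) (1 : k)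
  rw [deg_single] at this
  rwa [X_pow_eq]

lemma ordGE_sub_C (f : MvPowerSeries (Fin 3) k) :
    OrdGE (f - C (constantCoeff f)) 1 := by
  intro m hm
  have : m = 0 := deg_eq_zero (by omega)
  subst this
  simp [coeff_zero_C, coeff_zero_eq_constantCoeff]


section Subst
variable (u : Fin 3 → MvPowerSeries (Fin 3) k)

/-- the substitution data: `X i ↦ u i * X i` -/
noncomputable def amap (i : Fin 3) : MvPowerSeries (Fin 3) k := u i * X i

/-- constant coefficients of multipliers -/
noncomputable def cc (i : Fin 3) : k := constantCoeff (u i)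

/-- diagonal coefficient attached to exponent `n` -/
noncomputable def Cf (n : Fin 3 →₀ ℕ) : k := ∏ i, cc u i ^ n i

/-- image of the monomial `X^n` under the substitution -/
noncomputable def key (n : Fin 3 →₀ ℕ) : MvPowerSeries (Fin 3) k := ∏ i, amap u i ^ n i

lemma key_add (p q : Fin 3 →₀ ℕ) : key u (p + q) = key u p * key u q := by
  simp [key, Finsupp.add_apply, pow_add, Finset.prod_mul_distrib]

lemma key_zero : key u 0 = 1 := by simp [key]

lemma amap_eq (i : Fin 3) :
    amap u i = C (cc u i) * X i + (u i - C (cc u i)) * X i := by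
  rw [amap]; ring

lemma ordGE_h (i : Fin 3) : OrdGE ((u i - C (cc u i)) * X i) 2 := by
  have := ordGE_mul (ordGE_sub_C (u i)) (ordGE_X (k := k) i)
  exact this

lemma pow_shape (i : Fin 3) (e : ℕ) :
    ∃ r, amap u i ^ e = C (cc u i ^ e) * (X i) ^ e + r ∧ OrdGE r (e + 1) := by
  induction e with
  | zero => exact ⟨0, by simp, ordGE_zero 1⟩
  | succ e ih =>
    obtain ⟨r, hr, ho⟩ := ih
    set h := (u i - C (cc u i)) * X i with hh
    refine ⟨C (cc u i ^ e) * (X i) ^ e * h + (C (cc u i) * X i) * r + h * r,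
      ?_, ?_⟩
    · rw [pow_succ, hr, amap_eq u i, ← hh]
      simp only [map_pow]
      ring
    · apply ordGE_add
      apply ordGE_add
      · have h1 : OrdGE (C (cc u i ^ e) * (X i) ^ e) e :=
          ordGE_C_mul _ (ordGE_X_pow i e)
        have := ordGE_mul h1 (ordGE_h u i)
        exact ordGE_mono this (by omega)
      · have h1 : OrdGE (C (cc u i) * X i) 1 := ordGE_C_mul _ (ordGE_X i)
        have := ordGE_mul h1 ho
        exact ordGE_mono this (by omega)
      · have := ordGE_mul (ordGE_h u i) ho
        exact ordGE_mono this (by omega)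

lemma key_shape_aux (n : Fin 3 →₀ ℕ) (s : Finset (Fin 3)) :
    ∃ r, ∏ i ∈ s, amap u i ^ n i =
      C (∏ i ∈ s, cc u i ^ n i) * monomial (∑ i ∈ s, Finsupp.single i (n i)) 1 + r ∧
      OrdGE r ((∑ i ∈ s, n i) + 1) := by
  classical
  induction s using Finset.induction_on with
  | empty =>
    refine ⟨0, by simp, ordGE_zero 1⟩
  | insert j s hj ih =>
    obtain ⟨R, hR, hRo⟩ := ih
    obtain ⟨r, hr, hro⟩ := pow_shape u j (n j)
    have hAo : OrdGE (C (cc u j ^ n j) * (X j : MvPowerSeries (Fin 3) k) ^ n j) (n j) :=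
      ordGE_C_mul _ (ordGE_X_pow j (n j))
    have hPo : OrdGE (C (∏ i ∈ s, cc u i ^ n i) *
        monomial (∑ i ∈ s, Finsupp.single i (n i)) (1 : k)) (∑ i ∈ s, n i) := by
      have := ordGE_C_mul (f := monomial (∑ i ∈ s, Finsupp.single i (n i)) (1:k))
        (∏ i ∈ s, cc u i ^ n i) (ordGE_monomial _ _)
      rwa [deg_sum, Finset.sum_congr rfl (fun i _ => deg_single i (n i))] at this
    refine ⟨C (cc u j ^ n j) * (X j) ^ n j * R +
      r * (C (∏ i ∈ s, cc u i ^ n i) * monomial (∑ i ∈ s, Finsupp.single i (n i)) 1) +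
      r * R, ?_, ?_⟩
    · rw [Finset.prod_insert hj, hr, hR, Finset.prod_insert hj, Finset.sum_insert hj]
      have hAP : (C (cc u j ^ n j) * (X j : MvPowerSeries (Fin 3) k) ^ n j) *
          (C (∏ i ∈ s, cc u i ^ n i) *
            monomial (∑ i ∈ s, Finsupp.single i (n i)) 1) =
          C (cc u j ^ n j * ∏ i ∈ s, cc u i ^ n i) *
            monomial (Finsupp.single j (n j) + ∑ i ∈ s, Finsupp.single i (n i)) 1 := by
        rw [X_pow_eq, map_mul,
          show (monomial (Finsupp.single j (n j) + ∑ i ∈ s, Finsupp.single i (n i)) (1:k)) =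
            monomial (Finsupp.single j (n j)) 1 *
              monomial (∑ i ∈ s, Finsupp.single i (n i)) 1 from by
            rw [monomial_mul_monomial, one_mul]]
        ring
      linear_combination hAP
    · rw [Finset.sum_insert hj]
      apply ordGE_add
      apply ordGE_add
      · exact ordGE_mono (ordGE_mul hAo hRo) (by omega)
      · exact ordGE_mono (ordGE_mul hro hPo) (by omega)
      · exact ordGE_mono (ordGE_mul hro hRo) (by omega)

lemma key_shape (n : Fin 3 →₀ ℕ) :
    ∃ r, key u n = C (Cf u n) * monomial n 1 + r ∧ OrdGE r (deg n + 1) := by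
  obtain ⟨r, hr, ho⟩ := key_shape_aux u n Finset.univ
  refine ⟨r, ?_, ho⟩
  rwa [Finsupp.univ_sum_single] at hr

lemma coeff_key_le {m n : Fin 3 →₀ ℕ} (h : deg m ≤ deg n) :
    coeff m (key u n) = if m = n then Cf u n else 0 := by
  obtain ⟨r, hr, ho⟩ := key_shape u n
  rw [hr, map_add, ho m (by omega), add_zero, coeff_C_mul, coeff_monomial]
  split <;> simp

lemma ordGE_key (n : Fin 3 →₀ ℕ) : OrdGE (key u n) (deg n) := by
  intro m hm
  rw [coeff_key_le u (le_of_lt hm)]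
  have : m ≠ n := by rintro rfl; omega
  simp [this]


/-- bounding exponent -/
noncomputable def DB (m : Fin 3 →₀ ℕ) : Fin 3 →₀ ℕ := Finsupp.equivFunOnFinite.symm (fun _ => deg m)

/-- the finite set of exponents relevant for coefficient `m` -/
noncomputable def S (m : Fin 3 →₀ ℕ) : Finset (Fin 3 →₀ ℕ) := Finset.Iic (DB m)

lemma mem_S {m n : Fin 3 →₀ ℕ} : n ∈ S m ↔ ∀ i, n i ≤ deg m := by
  simp only [S, Finset.mem_Iic, Finsupp.le_def, DB]
  exact Iff.rfl

lemma self_mem_S (m : Fin 3 →₀ ℕ) : m ∈ S m := mem_S.mpr (le_deg m)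

lemma zero_mem_S (m : Fin 3 →₀ ℕ) : 0 ∈ S m := mem_S.mpr (fun i => Nat.zero_le _)

lemma S_mono {p m : Fin 3 →₀ ℕ} (h : deg p ≤ deg m) : S p ⊆ S m := by
  intro n hn
  rw [mem_S] at hn ⊢
  exact fun i => le_trans (hn i) h

lemma deg_lt_of_not_mem_S {m n : Fin 3 →₀ ℕ} (h : n ∉ S m) : deg m < deg n := by
  rw [mem_S] at h
  push_neg at h
  obtain ⟨i, hi⟩ := h
  exact lt_of_lt_of_le hi (le_deg n i)

lemma coeff_key_not_mem {m n : Fin 3 →₀ ℕ} (h : n ∉ S m) :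
    coeff m (key u n) = 0 :=
  ordGE_key u n m (deg_lt_of_not_mem_S h)

/-- The substitution map `X i ↦ u i * X i`, coefficientwise. -/
noncomputable def substFun (f : MvPowerSeries (Fin 3) k) : MvPowerSeries (Fin 3) k :=
  fun m => ∑ n ∈ S m, coeff n f * coeff m (key u n)

lemma coeff_substFun (f : MvPowerSeries (Fin 3) k) (m : Fin 3 →₀ ℕ) :
    coeff m (substFun u f) = ∑ n ∈ S m, coeff n f * coeff m (key u n) := rfl

lemma coeff_substFun_superset {f : MvPowerSeries (Fin 3) k} {m : Fin 3 →₀ ℕ}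
    {T : Finset (Fin 3 →₀ ℕ)} (hT : S m ⊆ T) :
    coeff m (substFun u f) = ∑ n ∈ T, coeff n f * coeff m (key u n) := by
  rw [coeff_substFun]
  exact Finset.sum_subset hT (fun n _ hn => by rw [coeff_key_not_mem u hn, mul_zero])

lemma substFun_one : substFun u 1 = 1 := by
  apply MvPowerSeries.ext
  intro m
  rw [coeff_substFun]
  rw [Finset.sum_eq_single 0]
  · rw [key_zero, coeff_one, coeff_one]
    simp
  · intro n _ hn
    rw [coeff_one, if_neg hn, zero_mul]
  · intro h; exact absurd (zero_mem_S m) h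

lemma substFun_add (f g : MvPowerSeries (Fin 3) k) :
    substFun u (f + g) = substFun u f + substFun u g := by
  apply MvPowerSeries.ext
  intro m
  rw [map_add, coeff_substFun, coeff_substFun, coeff_substFun, ← Finset.sum_add_distrib]
  exact Finset.sum_congr rfl (fun n _ => by rw [map_add, add_mul])

lemma substFun_mul (f g : MvPowerSeries (Fin 3) k) :
    substFun u (f * g) = substFun u f * substFun u g := by
  apply MvPowerSeries.ext
  intro m
  have hR : ∀ pq : (Fin 3 →₀ ℕ) × (Fin 3 →₀ ℕ), pq ∈ Finset.HasAntidiagonal.antidiagonal m →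
      coeff pq.1 (substFun u f) * coeff pq.2 (substFun u g) =
      ∑ p ∈ S m, ∑ q ∈ S m,
        (coeff p f * coeff pq.1 (key u p)) * (coeff q g * coeff pq.2 (key u q)) := by
    intro pq hpq
    rw [Finset.HasAntidiagonal.mem_antidiagonal] at hpq
    have hdm : deg pq.1 + deg pq.2 = deg m := by
      rw [← deg_add, hpq]
    have h1 : deg pq.1 ≤ deg m := by omega
    have h2 : deg pq.2 ≤ deg m := by omega
    rw [coeff_substFun_superset u (S_mono h1), coeff_substFun_superset u (S_mono h2),
      Finset.sum_mul_sum]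
  have hL : ∀ n ∈ S m, coeff n (f * g) * coeff m (key u n) =
      ∑ p ∈ S m, ∑ q ∈ S m,
        (if p + q = n then coeff p f * coeff q g * coeff m (key u n) else 0) := by
    intro n hn
    rw [coeff_mul]
    have hanti : Finset.HasAntidiagonal.antidiagonal n = (S m ×ˢ S m).filter (fun pq => pq.1 + pq.2 = n) := by
      ext pq
      simp only [Finset.HasAntidiagonal.mem_antidiagonal, Finset.mem_filter, Finset.mem_product]
      constructor
      · intro h
        have hmem : ∀ (a : Fin 3 →₀ ℕ), a ≤ n → a ∈ S m := by
          intro a ha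
          rw [mem_S]
          intro i
          exact le_trans (ha i) (le_trans (mem_S.mp hn i) (le_refl _))
        refine ⟨⟨hmem pq.1 ?_, hmem pq.2 ?_⟩, h⟩
        · intro i
          have := DFunLike.congr_fun h i
          simp only [Finsupp.add_apply] at this
          omega
        · intro i
          have := DFunLike.congr_fun h i
          simp only [Finsupp.add_apply] at this
          omega
      · exact fun h => h.2
    rw [hanti, Finset.sum_filter, Finset.sum_mul, Finset.sum_product]
    refine Finset.sum_congr rfl (fun p _ => Finset.sum_congr rfl (fun q _ => ?_))
    by_cases hpqn : p + q = n <;> simp [hpqn]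
  have lhs_eq : ∀ p q : Fin 3 →₀ ℕ,
      (∑ n ∈ S m, if p + q = n then coeff p f * coeff q g * coeff m (key u n) else 0)
      = coeff p f * coeff q g * coeff m (key u (p + q)) := by
    intro p q
    simp only [eq_comm (a := p + q)]
    rw [Finset.sum_ite_eq' (S m) (p + q) (fun n => coeff p f * coeff q g * coeff m (key u n))]
    split
    · rfl
    · next h => rw [coeff_key_not_mem u h, mul_zero]
  have L1 : coeff m (substFun u (f * g)) =
      ∑ p ∈ S m, ∑ q ∈ S m, coeff p f * coeff q g * coeff m (key u (p + q)) := by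
    rw [coeff_substFun, Finset.sum_congr rfl hL, Finset.sum_comm]
    refine Finset.sum_congr rfl fun p _ => ?_
    rw [Finset.sum_comm]
    exact Finset.sum_congr rfl fun q _ => lhs_eq p q
  have R1 : coeff m (substFun u f * substFun u g) =
      ∑ p ∈ S m, ∑ q ∈ S m, coeff p f * coeff q g * coeff m (key u (p + q)) := by
    rw [coeff_mul, Finset.sum_congr rfl hR, Finset.sum_comm]
    refine Finset.sum_congr rfl fun p _ => ?_
    rw [Finset.sum_comm]
    refine Finset.sum_congr rfl fun q _ => ?_
    rw [key_add, coeff_mul, Finset.mul_sum]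
    exact Finset.sum_congr rfl fun uv _ => by ring
  exact L1.trans R1.symm

lemma substFun_C (r : k) : substFun u (C r) = C r := by
  apply MvPowerSeries.ext
  intro m
  rw [coeff_substFun, Finset.sum_eq_single 0]
  · rw [key_zero, coeff_zero_C, coeff_one, coeff_C]
    split <;> simp
  · intro n _ hn
    rw [coeff_C, if_neg hn, zero_mul]
  · intro h; exact absurd (zero_mem_S m) h

/-- The substitution as an algebra homomorphism. -/
noncomputable def subst : MvPowerSeries (Fin 3) k →ₐ[k] MvPowerSeries (Fin 3) k where
  toFun := substFun u
  map_one' := substFun_one u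
  map_mul' := substFun_mul u
  map_zero' := by
    apply MvPowerSeries.ext
    intro m
    rw [coeff_substFun]
    simp
  map_add' := substFun_add u
  commutes' := fun r => by
    simp only [MvPowerSeries.algebraMap_apply, Algebra.algebraMap_self_apply]
    exact substFun_C u r

lemma subst_X (i : Fin 3) : subst u (X i) = u i * X i := by
  apply MvPowerSeries.ext
  intro m
  have hkey : key u (Finsupp.single i 1) = amap u i := by
    rw [key, Finset.prod_eq_single i]
    · rw [Finsupp.single_eq_same, pow_one]
    · intro j _ hj
      rw [Finsupp.single_eq_of_ne hj, pow_zero]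
    · exact fun h => absurd (Finset.mem_univ i) h
  show coeff m (substFun u (X i)) = _
  rw [coeff_substFun, Finset.sum_eq_single (Finsupp.single i 1)]
  · rw [coeff_X, if_pos rfl, one_mul, hkey]
    by_cases hmem : Finsupp.single i 1 ∈ S m
    · rfl
    · rfl
  · intro n _ hn
    rw [coeff_X, if_neg hn, zero_mul]
  · intro h
    have hdm : deg m < deg (Finsupp.single i 1) := deg_lt_of_not_mem_S h
    rw [deg_single] at hdm
    have hm0 : m = 0 := deg_eq_zero (by omega)
    subst hm0
    rw [coeff_X, if_pos rfl, one_mul, hkey]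
    rw [show coeff 0 (amap u i) = constantCoeff (amap u i) from rfl]
    rw [amap, map_mul, constantCoeff_X, mul_zero]


lemma Cf_ne_zero (hc : ∀ i, cc u i ≠ 0) (n : Fin 3 →₀ ℕ) : Cf u n ≠ 0 :=
  Finset.prod_ne_zero_iff.mpr (fun i _ => pow_ne_zero _ (hc i))

lemma coeff_subst_triangle (f : MvPowerSeries (Fin 3) k) (m : Fin 3 →₀ ℕ) :
    coeff m (subst u f) = Cf u m * coeff m f +
      ∑ n ∈ (S m).filter (fun n => deg n < deg m), coeff n f * coeff m (key u n) := by
  show coeff m (substFun u f) = _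
  rw [coeff_substFun, ← Finset.sum_filter_add_sum_filter_not (S m) (fun n => deg n < deg m)]
  rw [add_comm]
  congr 1
  rw [Finset.sum_eq_single m]
  · rw [coeff_key_le u (le_refl _), if_pos rfl]
    ring
  · intro n hn hne
    rw [Finset.mem_filter, not_lt] at hn
    rw [coeff_key_le u hn.2, if_neg (Ne.symm hne), mul_zero]
  · intro h
    exact absurd (Finset.mem_filter.mpr ⟨self_mem_S m, by omega⟩) h

lemma subst_injective (hc : ∀ i, cc u i ≠ 0) : Function.Injective (subst u) := by
  rw [injective_iff_map_eq_zero]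
  intro f hf
  by_contra hne
  have hex : ∃ d, ∃ m, deg m = d ∧ coeff m f ≠ 0 := by
    have : ∃ m, coeff m f ≠ 0 := by
      by_contra h
      push_neg at h
      exact hne (MvPowerSeries.ext h)
    obtain ⟨m, hm⟩ := this
    exact ⟨deg m, m, rfl, hm⟩
  classical
  obtain ⟨m, hdm, hm⟩ := Nat.find_spec hex
  have hmin : ∀ n : Fin 3 →₀ ℕ, deg n < deg m → coeff n f = 0 := by
    intro n hn
    by_contra h
    exact absurd ⟨n, rfl, h⟩ (Nat.find_min hex (by omega))
  have := coeff_subst_triangle u f m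
  rw [hf, map_zero, Finset.sum_eq_zero (fun n hn => by
      rw [hmin n (Finset.mem_filter.mp hn).2, zero_mul]), add_zero] at this
  exact hm (by
    have hCf := Cf_ne_zero u hc m
    field_simp at this
    exact (mul_eq_zero.mp this.symm).resolve_left hCf)

/-- recursive construction of a preimage under `subst` -/
noncomputable def aux (g : MvPowerSeries (Fin 3) k) : ℕ → (Fin 3 →₀ ℕ) → k
  | d, m =>
    (Cf u m)⁻¹ * (coeff m g -
      ∑ n ∈ ((S m).filter (fun n => deg n < d)).attach,
        aux g (deg n.1) n.1 * coeff m (key u n.1))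
  termination_by d _ => d
  decreasing_by
    exact (Finset.mem_filter.mp n.2).2

noncomputable def preimage (g : MvPowerSeries (Fin 3) k) : MvPowerSeries (Fin 3) k :=
  fun m => aux u g (deg m) m

lemma coeff_preimage (g : MvPowerSeries (Fin 3) k) (m : Fin 3 →₀ ℕ) :
    coeff m (preimage u g) = aux u g (deg m) m := rfl

lemma subst_surjective (hc : ∀ i, cc u i ≠ 0) : Function.Surjective (subst u) := by
  intro g
  refine ⟨preimage u g, ?_⟩
  apply MvPowerSeries.ext
  intro m
  rw [coeff_subst_triangle]
  have hT : ∀ n ∈ (S m).filter (fun n => deg n < deg m),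
      coeff n (preimage u g) * coeff m (key u n) =
        aux u g (deg n) n * coeff m (key u n) := fun n _ => by rw [coeff_preimage u g n]
  rw [Finset.sum_congr rfl hT, coeff_preimage, aux]
  rw [Finset.sum_attach (((S m).filter (fun n => deg n < deg m)))
    (fun n => aux u g (deg n) n * coeff m (key u n))]
  rw [mul_inv_cancel_left₀ (Cf_ne_zero u hc m)]
  ring


/-- the substitution `X i ↦ u i * X i` as an algebra equivalence, when all multipliers
have nonzero constant coefficient -/
noncomputable def substEquiv (hc : ∀ i, cc u i ≠ 0) :
    MvPowerSeries (Fin 3) k ≃ₐ[k] MvPowerSeries (Fin 3) k :=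
  AlgEquiv.ofBijective (subst u) ⟨subst_injective u hc, subst_surjective u hc⟩

lemma substEquiv_apply (hc : ∀ i, cc u i ≠ 0) (f : MvPowerSeries (Fin 3) k) :
    substEquiv u hc f = subst u f := rfl

end Subst
end Stmt15

open Stmt15 in
/-- For b, c ≠ 0, k[[X,Y,Z]]/(Z² + (Y+b)X³ + cXY³) ≅ k[[X,Y,Z]]/(Z² + X³ + XY³). -/
theorem stmt_15 (k : Type*) [Field k] [IsAlgClosed k] [CharP k 2] (b c : k)
    (hb : b ≠ 0) (hc : c ≠ 0) :
    Nonempty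
      ((MvPowerSeries (Fin 3) k ⧸
          Ideal.span {(X 2 : MvPowerSeries (Fin 3) k) ^ 2 +
            (X 1 + (MvPowerSeries.C : k →+* MvPowerSeries (Fin 3) k) b) * X 0 ^ 3 +
            (MvPowerSeries.C : k →+* MvPowerSeries (Fin 3) k) c * (X 0 * X 1 ^ 3)}) ≃ₐ[k]
        (MvPowerSeries (Fin 3) k ⧸
          Ideal.span {(X 2 : MvPowerSeries (Fin 3) k) ^ 2 + X 0 ^ 3 + X 0 * X 1 ^ 3})) := by
  obtain ⟨γ, hγ⟩ := IsAlgClosed.exists_pow_nat_eq (k := k) c (n := 3) (by norm_num)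
  have hγ0 : γ ≠ 0 := by
    rintro rfl
    rw [zero_pow (by norm_num)] at hγ
    exact hc hγ.symm
  -- the unit Y + b
  set t : MvPowerSeries (Fin 3) k := X 1 + MvPowerSeries.C b with ht
  have htc : constantCoeff t = b := by
    rw [ht, map_add, constantCoeff_X, constantCoeff_C, zero_add]
  have htu : IsUnit t := by
    rw [MvPowerSeries.isUnit_iff_constantCoeff, htc]
    exact isUnit_iff_ne_zero.mpr hb
  obtain ⟨T, hT⟩ := htu
  set e : MvPowerSeries (Fin 3) k := ↑T⁻¹ with he
  have heT : e * t = 1 := by rw [he, ← hT]; exact T.inv_mul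
  have hec : constantCoeff e ≠ 0 := by
    intro h0
    have := congrArg (constantCoeff) heT
    rw [map_mul, h0, zero_mul, map_one] at this
    exact zero_ne_one this
  -- multipliers
  set u : Fin 3 → MvPowerSeries (Fin 3) k :=
    ![e, MvPowerSeries.C γ * e, e ^ 2] with hu
  have hcc : ∀ i, cc u i ≠ 0 := by
    intro i
    fin_cases i
    · exact hec
    · show constantCoeff (MvPowerSeries.C γ * e) ≠ 0
      rw [map_mul, constantCoeff_C]
      exact mul_ne_zero hγ0 hec
    · show constantCoeff (e ^ 2) ≠ 0
      rw [map_pow]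
      exact pow_ne_zero _ hec
  set E := substEquiv u hcc with hE
  have hE0 : E (X 0) = e * X 0 := by
    rw [hE, substEquiv_apply, Stmt15.subst_X]; rfl
  have hE1 : E (X 1) = (MvPowerSeries.C γ * e) * X 1 := by
    rw [hE, substEquiv_apply, Stmt15.subst_X]; rfl
  have hE2 : E (X 2) = e ^ 2 * X 2 := by
    rw [hE, substEquiv_apply, Stmt15.subst_X]; rfl
  -- image of the second generator
  have hgen : E ((X 2 : MvPowerSeries (Fin 3) k) ^ 2 + X 0 ^ 3 + X 0 * X 1 ^ 3) =
      e ^ 4 * ((X 2 : MvPowerSeries (Fin 3) k) ^ 2 +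
        (X 1 + MvPowerSeries.C b) * X 0 ^ 3 +
        MvPowerSeries.C c * (X 0 * X 1 ^ 3)) := by
    rw [map_add, map_add, map_pow, map_pow, map_mul, map_pow, hE0, hE1, hE2]
    rw [← ht, ← hγ, map_pow]
    calc (e ^ 2 * X 2) ^ 2 + (e * X 0) ^ 3 +
          e * X 0 * (MvPowerSeries.C γ * e * X 1) ^ 3
        = e ^ 4 * (X 2 ^ 2 + t * X 0 ^ 3 +
            (MvPowerSeries.C γ) ^ 3 * (X 0 * X 1 ^ 3)) -
          e ^ 3 * X 0 ^ 3 * (e * t - 1) := by ring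
      _ = e ^ 4 * (X 2 ^ 2 + t * X 0 ^ 3 +
            (MvPowerSeries.C γ) ^ 3 * (X 0 * X 1 ^ 3)) := by
          rw [heT]; ring
  -- unit e^4
  have he4 : IsUnit (e ^ 4) := by
    refine IsUnit.pow 4 ?_
    exact ⟨T⁻¹, rfl⟩
  -- ideal transport
  have hmap : Ideal.span {(X 2 : MvPowerSeries (Fin 3) k) ^ 2 +
        (X 1 + MvPowerSeries.C b) * X 0 ^ 3 +
        MvPowerSeries.C c * (X 0 * X 1 ^ 3)} =
      Ideal.map (E : MvPowerSeries (Fin 3) k →+* MvPowerSeries (Fin 3) k)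
        (Ideal.span {(X 2 : MvPowerSeries (Fin 3) k) ^ 2 + X 0 ^ 3 + X 0 * X 1 ^ 3}) := by
    rw [Ideal.map_span, Set.image_singleton]
    have : (E : MvPowerSeries (Fin 3) k →+* MvPowerSeries (Fin 3) k)
        ((X 2 : MvPowerSeries (Fin 3) k) ^ 2 + X 0 ^ 3 + X 0 * X 1 ^ 3) =
        e ^ 4 * ((X 2 : MvPowerSeries (Fin 3) k) ^ 2 +
          (X 1 + MvPowerSeries.C b) * X 0 ^ 3 +
          MvPowerSeries.C c * (X 0 * X 1 ^ 3)) := hgen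
    rw [this, Ideal.span_singleton_mul_left_unit he4]
  exact ⟨(Ideal.quotientEquivAlg _ _ E hmap).symm⟩
end
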